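/- Let MB_n be the modified bubble-sort graph with n ≥ 6. For every subset S ⊆ V(MB_n) with |S| = 4, the neighborhood N(S) satisfies |N(S)| ≥ 4n - 9, and this bound is attained: there exists S with |S| = 4 and |N(S)| = 4n - 9. -/

import Mathlib

/-- The modified bubble-sort graph: the Cayley graph of `Sym(n)` generated by the
transpositions `(12),(23),…,((n-1)n),(n1)` (positions taken mod `n`). -/
def MB (n : ℕ) : SimpleGraph (Equiv.Perm (Fin n)) :=
  SimpleGraph.fromRel fun g h =>
    ∃ i : Fin n, h = g * Equiv.swap i ⟨(i.val + 1) % n, Nat.mod_lt _ i.pos⟩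
/-- `N(S)`: vertices outside `S` adjacent to some vertex of `S`. -/
def setNbhd {V : Type*} (G : SimpleGraph V) (S : Set V) : Set V :=
  {w | w ∉ S ∧ ∃ v ∈ S, G.Adj v w}

open Equiv Equiv.Perm Finset
open Fin.NatCast Fin.CommRing

namespace MBx
attribute [local instance] Classical.propDecidable

variable {n : ℕ}

/-- the generator: adjacent transposition (i, i+1 mod n) -/
def tg (n : ℕ) [NeZero n] (i : Fin n) : Equiv.Perm (Fin n) := Equiv.swap i (i + 1)

section core
variable [NeZero n]

lemma shift_cases (i : Fin n) (k : ℕ) (hk : k < n) :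
    ((i + (k : Fin n)).val = i.val + k ∧ i.val + k < n) ∨
    ((i + (k : Fin n)).val = i.val + k - n ∧ n ≤ i.val + k) := by
  have hlt := i.isLt
  rw [Fin.val_add, Fin.val_natCast, Nat.mod_eq_of_lt hk]
  rcases Nat.lt_or_ge (i.val + k) n with h | h
  · left; exact ⟨Nat.mod_eq_of_lt h, h⟩
  · right
    refine ⟨?_, h⟩
    rw [Nat.mod_eq_sub_mod h, Nat.mod_eq_of_lt (by omega)]

lemma shift_ne (hn : 6 ≤ n) (i : Fin n) {a b : ℕ} (ha : a < n) (hb : b < n) (hab : a ≠ b) :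
    i + (a : Fin n) ≠ i + (b : Fin n) := by
  intro h
  have h' := congrArg Fin.val h
  have hlt := i.isLt
  rcases shift_cases i a ha with ⟨h1, h1'⟩ | ⟨h1, h1'⟩ <;>
    rcases shift_cases i b hb with ⟨h2, h2'⟩ | ⟨h2, h2'⟩ <;> rw [h1, h2] at h' <;> omega

variable (hn : 6 ≤ n)

-- normal forms for iterated +1
lemma nf0 (i : Fin n) : i = i + ((0 : ℕ) : Fin n) := by push_cast; ring
lemma nf1 (i : Fin n) : i + 1 = i + ((1 : ℕ) : Fin n) := by push_cast; ring
lemma nf2 (i : Fin n) : i + 1 + 1 = i + ((2 : ℕ) : Fin n) := by push_cast; ring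
lemma nf3 (i : Fin n) : i + 1 + 1 + 1 = i + ((3 : ℕ) : Fin n) := by push_cast; ring
lemma nf4 (i : Fin n) : i + 1 + 1 + 1 + 1 = i + ((4 : ℕ) : Fin n) := by push_cast; ring

include hn

lemma ne1 (i : Fin n) : i + 1 ≠ i := by
  have h := shift_ne hn i (a := 1) (b := 0) (by omega) (by omega) (by omega)
  rw [nf1]; simpa using h

lemma ne2 (i : Fin n) : i + 1 + 1 ≠ i := by
  have h := shift_ne hn i (a := 2) (b := 0) (by omega) (by omega) (by omega)
  rw [nf2]; simpa using h

lemma ne3 (i : Fin n) : i + 1 + 1 + 1 ≠ i := by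
  have h := shift_ne hn i (a := 3) (b := 0) (by omega) (by omega) (by omega)
  rw [nf3]; simpa using h

lemma ne4 (i : Fin n) : i + 1 + 1 + 1 + 1 ≠ i := by
  have h := shift_ne hn i (a := 4) (b := 0) (by omega) (by omega) (by omega)
  rw [nf4]; simpa using h

omit hn in
lemma succ_inj {i j : Fin n} (h : i + 1 = j + 1) : i = j := by
  exact add_right_cancel h


-- applications of generators
omit hn in
lemma tg_a (i : Fin n) : tg n i i = i + 1 := Equiv.swap_apply_left i (i+1)

omit hn in
lemma tg_b (i : Fin n) : tg n i (i + 1) = i := Equiv.swap_apply_right i (i+1)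

omit hn in
lemma tg_c {i x : Fin n} (h1 : x ≠ i) (h2 : x ≠ i + 1) : tg n i x = x :=
  Equiv.swap_apply_of_ne_of_ne h1 h2

lemma tg_ne_one (i : Fin n) : tg n i ≠ 1 := by
  intro h
  have : tg n i i = i := by rw [h]; rfl
  rw [tg_a] at this
  exact ne1 hn i this

omit hn in
lemma tg_mul_self (i : Fin n) : tg n i * tg n i = 1 := Equiv.swap_mul_self _ _

omit hn in
lemma tg_inv (i : Fin n) : (tg n i)⁻¹ = tg n i := Equiv.swap_inv i (i+1)

lemma tg_sign (i : Fin n) : Equiv.Perm.sign (tg n i) = -1 :=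
  Equiv.Perm.sign_swap (Ne.symm (ne1 hn i))

lemma tg_inj {i j : Fin n} (h : tg n i = tg n j) : i = j := by
  have h1 : tg n j i = i + 1 := by rw [← h, tg_a]
  by_cases hij : i = j
  · exact hij
  by_cases hij2 : i = j + 1
  · subst hij2
    rw [tg_b j] at h1
    exact absurd h1 (Ne.symm (ne2 hn j))
  · rw [tg_c hij hij2] at h1
    exact absurd h1.symm (ne1 hn i)

/-- transpositions `i,i+1` and `j,j+1` are disjoint -/
def Far (i j : Fin n) : Prop := j ≠ i ∧ j ≠ i + 1 ∧ i ≠ j + 1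

lemma far_symm {i j : Fin n} (h : Far i j) : Far j i := ⟨Ne.symm h.1, h.2.2, h.2.1⟩

omit hn in
lemma succ_ne_succ {i j : Fin n} (h : i ≠ j) : i + 1 ≠ j + 1 := fun hh => h (add_right_cancel hh)

-- values of a "double transposition" A = tg i * tg j with Far i j
lemma dt_i {i j : Fin n} (h : Far i j) : (tg n i * tg n j) i = i + 1 := by
  rw [Equiv.Perm.mul_apply, tg_c (i := j) (Ne.symm h.1) h.2.2, tg_a]

lemma dt_i1 {i j : Fin n} (h : Far i j) : (tg n i * tg n j) (i + 1) = i := by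
  rw [Equiv.Perm.mul_apply, tg_c (i := j) (Ne.symm h.2.1) (succ_ne_succ (Ne.symm h.1)), tg_b]

omit hn in
lemma dt_j {i j : Fin n} (h : Far i j) : (tg n i * tg n j) j = j + 1 := by
  rw [Equiv.Perm.mul_apply, tg_a j, tg_c (Ne.symm h.2.2) (succ_ne_succ h.1)]

omit hn in
lemma dt_j1 {i j : Fin n} (h : Far i j) : (tg n i * tg n j) (j + 1) = j := by
  rw [Equiv.Perm.mul_apply, tg_b j, tg_c h.1 h.2.1]

omit hn in
lemma dt_o {i j x : Fin n} (h1 : x ≠ i) (h2 : x ≠ i + 1) (h3 : x ≠ j) (h4 : x ≠ j + 1) :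
    (tg n i * tg n j) x = x := by
  rw [Equiv.Perm.mul_apply, tg_c (i := j) h3 h4, tg_c h1 h2]

omit hn in
lemma far_commute {i j : Fin n} (h : Far i j) : tg n i * tg n j = tg n j * tg n i := by
  have hd : (tg n i).Disjoint (tg n j) := by
    intro x
    by_cases h1 : x = i
    · right; subst h1; exact tg_c (Ne.symm h.1) h.2.2
    by_cases h2 : x = i + 1
    · right; subst h2; exact tg_c (Ne.symm h.2.1) (succ_ne_succ (Ne.symm h.1))
    · left; exact tg_c h1 h2
  exact hd.commute.eq

omit hn in
lemma dt_sq {i j : Fin n} (h : Far i j) : (tg n i * tg n j) * (tg n i * tg n j) = 1 := by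
  rw [mul_assoc, ← mul_assoc (tg n j), ← far_commute h, mul_assoc, tg_mul_self, mul_one, tg_mul_self]


-- 3-cycle tables
lemma c3a (i : Fin n) : (tg n i * tg n (i+1)) i = i + 1 := by
  rw [Equiv.Perm.mul_apply, tg_c (i := i+1) (Ne.symm (ne1 hn i)) (Ne.symm (ne2 hn i)), tg_a]

lemma c3b (i : Fin n) : (tg n i * tg n (i+1)) (i+1) = i + 1 + 1 := by
  rw [Equiv.Perm.mul_apply, tg_a (i+1), tg_c (ne2 hn i) (succ_ne_succ (ne1 hn i))]

lemma c3c (i : Fin n) : (tg n i * tg n (i+1)) (i+1+1) = i := by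
  rw [Equiv.Perm.mul_apply, tg_b (i+1), tg_b]

lemma c3o {i x : Fin n} (h1 : x ≠ i) (h2 : x ≠ i + 1) (h3 : x ≠ i + 1 + 1) :
    (tg n i * tg n (i+1)) x = x := by
  rw [Equiv.Perm.mul_apply, tg_c (i := i+1) h2 h3, tg_c h1 h2]

lemma d3a (j : Fin n) : (tg n (j+1) * tg n j) j = j + 1 + 1 := by
  rw [Equiv.Perm.mul_apply, tg_a j, tg_a (j+1)]

lemma d3b (j : Fin n) : (tg n (j+1) * tg n j) (j+1) = j := by
  rw [Equiv.Perm.mul_apply, tg_b j, tg_c (i := j+1) (Ne.symm (ne1 hn j)) (Ne.symm (ne2 hn j))]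

lemma d3c (j : Fin n) : (tg n (j+1) * tg n j) (j+1+1) = j + 1 := by
  rw [Equiv.Perm.mul_apply, tg_c (i := j) (ne2 hn j) (succ_ne_succ (ne1 hn j)), tg_b (j+1)]

lemma d3o {j x : Fin n} (h1 : x ≠ j) (h2 : x ≠ j + 1) (h3 : x ≠ j + 1 + 1) :
    (tg n (j+1) * tg n j) x = x := by
  rw [Equiv.Perm.mul_apply, tg_c (i := j) h1 h2, tg_c (i := j+1) h2 h3]

/-- Unique factorization of products of two generators. -/
theorem UF {i j k l : Fin n} (hij : i ≠ j) (h : tg n i * tg n j = tg n k * tg n l) :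
    (k = i ∧ l = j) ∨ (k = j ∧ l = i ∧ Far i j) := by
  have ev : ∀ x : Fin n, (tg n i * tg n j) x = (tg n k * tg n l) x := fun x => by rw [h]
  -- k ≠ l
  have hkl : k ≠ l := by
    intro hkl; subst hkl
    have h1 : (tg n k * tg n k) j = j := by rw [tg_mul_self]; rfl
    rw [← ev j] at h1
    by_cases hj1 : j = i + 1
    · subst hj1
      rw [c3b hn i] at h1
      exact ne1 hn (i+1) h1
    by_cases hi1 : i = j + 1
    · subst hi1
      rw [d3a hn j] at h1
      exact ne2 hn j h1
    · have hf : Far i j := ⟨Ne.symm hij, hj1, hi1⟩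
      rw [dt_j hf] at h1
      exact ne1 hn j h1
  by_cases hj1 : j = i + 1
  · subst hj1
    -- LHS is the 3-cycle i ↦ i+1 ↦ i+2 ↦ i
    by_cases hl1 : l = k + 1
    · subst hl1
      -- RHS 3-cycle k ↦ k+1 ↦ k+2 ↦ k
      by_cases hki : k = i
      · exact Or.inl ⟨hki, by rw [hki]⟩
      by_cases hki1 : k = i + 1
      · exfalso; subst hki1
        have e1 := ev (i+1+1)
        rw [c3c hn i, c3b hn (i+1)] at e1
        exact ne3 hn i e1.symm
      by_cases hki2 : k = i + 1 + 1
      · exfalso; subst hki2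
        have e1 := ev (i+1+1)
        rw [c3c hn i, c3a hn] at e1
        exact ne3 hn i e1.symm
      · exfalso
        have e1 := ev k
        rw [c3o hn hki hki1 hki2, c3a hn] at e1
        exact ne1 hn k e1.symm
    by_cases hk1 : k = l + 1
    · exfalso; subst hk1
      by_cases hli : l = i
      · subst hli
        have e1 := ev l
        rw [c3a hn, d3a hn] at e1
        exact ne1 hn (l+1) e1.symm
      by_cases hli1 : l = i + 1
      · subst hli1
        have e1 := ev i
        rw [c3a hn, d3o hn (Ne.symm (ne1 hn i)) (Ne.symm (ne2 hn i)) (Ne.symm (ne3 hn i))] at e1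
        exact ne1 hn i e1
      by_cases hli2 : l = i + 1 + 1
      · subst hli2
        have e1 := ev i
        rw [c3a hn, d3o hn (Ne.symm (ne2 hn i)) (Ne.symm (ne3 hn i)) (Ne.symm (ne4 hn i))] at e1
        exact ne1 hn i e1
      · have e1 := ev l
        rw [c3o hn hli hli1 hli2, d3a hn] at e1
        exact ne2 hn l e1.symm
    · -- Far k l, RHS involution but LHS 3-cycle
      exfalso
      have hfkl : Far k l := ⟨Ne.symm hkl, hl1, hk1⟩
      have hsq : (tg n k * tg n l) * (tg n k * tg n l) = 1 := dt_sq hfkl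
      rw [← h] at hsq
      have e1 : ((tg n i * tg n (i+1)) * (tg n i * tg n (i+1))) i = i := by rw [hsq]; rfl
      rw [Equiv.Perm.mul_apply, c3a hn, c3b hn] at e1
      exact ne2 hn i e1
  by_cases hi1 : i = j + 1
  · subst hi1
    -- LHS: j ↦ j+2, j+1 ↦ j, j+2 ↦ j+1
    by_cases hk1 : k = l + 1
    · subst hk1
      by_cases hlj : l = j
      · exact Or.inl ⟨by rw [hlj], hlj⟩
      by_cases hlj1 : l = j + 1
      · exfalso; subst hlj1
        have e1 := ev (j+1)
        rw [d3b hn, d3a hn] at e1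
        exact ne3 hn j e1.symm
      by_cases hlj2 : l = j + 1 + 1
      · exfalso; subst hlj2
        have e1 := ev (j+1+1)
        rw [d3c hn, d3a hn] at e1
        exact ne3 hn (j+1) e1.symm
      · exfalso
        have e1 := ev l
        rw [d3o hn hlj hlj1 hlj2, d3a hn] at e1
        exact ne2 hn l e1.symm
    by_cases hl1 : l = k + 1
    · exfalso; subst hl1
      -- RHS 3-cycle k ↦ k+1 ↦ k+2 ↦ k; LHS has no x with σ x = x + 1 pattern mismatch at k
      by_cases hkj : k = j
      · subst hkj
        have e1 := ev k
        rw [d3a hn, c3a hn] at e1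
        exact ne1 hn (k+1) e1
      by_cases hkj1 : k = j + 1
      · subst hkj1
        have e1 := ev (j+1)
        rw [d3b hn, c3a hn] at e1
        exact ne2 hn j e1.symm
      by_cases hkj2 : k = j + 1 + 1
      · subst hkj2
        have e1 := ev (j+1+1)
        rw [d3c hn, c3a hn] at e1
        exact ne2 hn (j+1) e1.symm
      · have e1 := ev k
        rw [d3o hn hkj hkj1 hkj2, c3a hn] at e1
        exact absurd e1.symm (ne1 hn k)
    · exfalso
      have hfkl : Far k l := ⟨Ne.symm hkl, hl1, hk1⟩
      have hsq : (tg n k * tg n l) * (tg n k * tg n l) = 1 := dt_sq hfkl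
      rw [← h] at hsq
      have e1 : ((tg n (j+1) * tg n j) * (tg n (j+1) * tg n j)) j = j := by rw [hsq]; rfl
      rw [Equiv.Perm.mul_apply, d3a hn, d3c hn] at e1
      exact ne1 hn j e1
  · -- Far i j
    have hf : Far i j := ⟨Ne.symm hij, hj1, hi1⟩
    by_cases hl1 : l = k + 1
    · exfalso; subst hl1
      have hsq : (tg n i * tg n j) * (tg n i * tg n j) = 1 := dt_sq hf
      rw [h] at hsq
      have e1 : ((tg n k * tg n (k+1)) * (tg n k * tg n (k+1))) k = k := by rw [hsq]; rfl
      rw [Equiv.Perm.mul_apply, c3a hn, c3b hn] at e1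
      exact ne2 hn k e1
    by_cases hk1 : k = l + 1
    · exfalso; subst hk1
      have hsq : (tg n i * tg n j) * (tg n i * tg n j) = 1 := dt_sq hf
      rw [h] at hsq
      have e1 : ((tg n (l+1) * tg n l) * (tg n (l+1) * tg n l)) l = l := by rw [hsq]; rfl
      rw [Equiv.Perm.mul_apply, d3a hn, d3c hn] at e1
      exact ne1 hn l e1
    · -- both far
      have hfkl : Far k l := ⟨Ne.symm hkl, hl1, hk1⟩
      have ek := ev k
      rw [dt_i hn hfkl] at ek
      by_cases hki : k = i
      · subst hki
        left
        refine ⟨rfl, ?_⟩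
        have ej := ev j
        rw [dt_j hf] at ej
        -- (tg k * tg l) j = j + 1
        by_cases hjl : j = l
        · exact hjl.symm
        by_cases hjl1 : j = l + 1
        · exfalso; subst hjl1
          rw [dt_j1 hfkl] at ej
          exact ne2 hn l ej
        · exfalso
          rw [dt_o (Ne.symm hij) hf.2.1 hjl hjl1] at ej
          exact ne1 hn j ej
      by_cases hki1 : k = i + 1
      · exfalso; subst hki1
        rw [dt_i1 hn hf] at ek
        exact ne2 hn i ek.symm
      by_cases hkj : k = j
      · subst hkj
        rw [dt_j hf] at ek  -- consistent
        right
        refine ⟨rfl, ?_, hf⟩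
        have el := ev l
        rw [dt_j hfkl] at el
        by_cases hli : l = i
        · exact hli
        by_cases hli1 : l = i + 1
        · exfalso; subst hli1
          rw [dt_i1 hn hf] at el
          exact ne2 hn i el.symm
        by_cases hlk1 : l = k + 1
        · exact absurd hlk1 hfkl.2.1
        · exfalso
          rw [dt_o hli hli1 (Ne.symm hkl) hlk1] at el
          exact ne1 hn l el.symm
      by_cases hkj1 : k = j + 1
      · exfalso; subst hkj1
        rw [dt_j1 hf] at ek
        exact ne2 hn j ek.symm
      · exfalso
        rw [dt_o hki hki1 hkj hkj1] at ek
        exact ne1 hn k ek.symm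


omit hn in
lemma fix_imp {A B : Equiv.Perm (Fin n)} (hA : A * A = 1) (x : Fin n)
    (h : (A * B) x = x) : B x = A x := by
  have h1 : A (B x) = x := by rw [← Equiv.Perm.mul_apply, h]
  have h2 : A (A (B x)) = A x := congrArg A h1
  rw [← Equiv.Perm.mul_apply A A, hA, Equiv.Perm.one_apply] at h2
  exact h2

/-- key lemma: product of two index-disjoint double transpositions moves ≥ 5 points,
    hence is not a product of two generators -/
theorem master {i j k l : Fin n} (hij : Far i j) (hkl : Far k l)
    (d1 : i ≠ k) (d2 : i ≠ l) (d3 : j ≠ k) (d4 : j ≠ l) (p q : Fin n) :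
    tg n i * tg n j * (tg n k * tg n l) ≠ tg n p * tg n q := by
  intro h
  have hA2 : (tg n i * tg n j) * (tg n i * tg n j) = 1 := dt_sq hij
  have mi : ((tg n i * tg n j) * (tg n k * tg n l)) i ≠ i := by
    intro hfix
    have hBA := fix_imp hA2 i hfix
    rw [dt_i hn hij] at hBA
    by_cases h1 : i = k + 1
    · rw [show (tg n k * tg n l) i = k by rw [h1]; exact dt_i1 hn hkl] at hBA
      rw [h1] at hBA
      exact ne2 hn k hBA.symm
    by_cases h2 : i = l + 1
    · rw [show (tg n k * tg n l) i = l by rw [h2]; exact dt_j1 hkl] at hBA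
      rw [h2] at hBA
      exact ne2 hn l hBA.symm
    · rw [dt_o d1 h1 d2 h2] at hBA
      exact ne1 hn i hBA.symm
  have mi1 : ((tg n i * tg n j) * (tg n k * tg n l)) (i+1) ≠ (i+1) := by
    intro hfix
    have hBA := fix_imp hA2 (i+1) hfix
    rw [dt_i1 hn hij] at hBA
    by_cases h1 : i + 1 = k
    · rw [show (tg n k * tg n l) (i+1) = k + 1 by rw [h1]; exact dt_i hn hkl] at hBA
      rw [← h1] at hBA
      exact ne2 hn i hBA
    by_cases h2 : i + 1 = l
    · rw [show (tg n k * tg n l) (i+1) = l + 1 by rw [h2]; exact dt_j hkl] at hBA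
      rw [← h2] at hBA
      exact ne2 hn i hBA
    · rw [dt_o h1 (succ_ne_succ d1) h2 (succ_ne_succ d2)] at hBA
      exact ne1 hn i hBA
  have mj : ((tg n i * tg n j) * (tg n k * tg n l)) j ≠ j := by
    intro hfix
    have hBA := fix_imp hA2 j hfix
    rw [dt_j hij] at hBA
    by_cases h1 : j = k + 1
    · rw [show (tg n k * tg n l) j = k by rw [h1]; exact dt_i1 hn hkl] at hBA
      rw [h1] at hBA
      exact ne2 hn k hBA.symm
    by_cases h2 : j = l + 1
    · rw [show (tg n k * tg n l) j = l by rw [h2]; exact dt_j1 hkl] at hBA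
      rw [h2] at hBA
      exact ne2 hn l hBA.symm
    · rw [dt_o d3 h1 d4 h2] at hBA
      exact ne1 hn j hBA.symm
  have mj1 : ((tg n i * tg n j) * (tg n k * tg n l)) (j+1) ≠ (j+1) := by
    intro hfix
    have hBA := fix_imp hA2 (j+1) hfix
    rw [dt_j1 hij] at hBA
    by_cases h1 : j + 1 = k
    · rw [show (tg n k * tg n l) (j+1) = k + 1 by rw [h1]; exact dt_i hn hkl] at hBA
      rw [← h1] at hBA
      exact ne2 hn j hBA
    by_cases h2 : j + 1 = l
    · rw [show (tg n k * tg n l) (j+1) = l + 1 by rw [h2]; exact dt_j hkl] at hBA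
      rw [← h2] at hBA
      exact ne2 hn j hBA
    · rw [dt_o h1 (succ_ne_succ d3) h2 (succ_ne_succ d4)] at hBA
      exact ne1 hn j hBA
  have hy0 : ∃ y0 : Fin n, (y0 = k ∨ y0 = k+1 ∨ y0 = l ∨ y0 = l+1) ∧
      y0 ≠ i ∧ y0 ≠ i+1 ∧ y0 ≠ j ∧ y0 ≠ j+1 := by
    by_cases hk : k = i ∨ k = i+1 ∨ k = j ∨ k = j+1
    case neg =>
      push_neg at hk
      exact ⟨k, Or.inl rfl, hk.1, hk.2.1, hk.2.2.1, hk.2.2.2⟩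
    rcases hk with hk | hk | hk | hk
    · exact absurd hk.symm d1
    · subst hk
      by_cases hk2 : i+1+1 = i ∨ i+1+1 = i+1 ∨ i+1+1 = j ∨ i+1+1 = j+1
      case neg =>
        push_neg at hk2
        exact ⟨i+1+1, Or.inr (Or.inl rfl), hk2.1, hk2.2.1, hk2.2.2.1, hk2.2.2.2⟩
      rcases hk2 with h2 | h2 | h2 | h2
      · exact absurd h2 (ne2 hn i)
      · exact absurd (add_right_cancel h2) (ne1 hn i)
      · subst h2
        by_cases hl : l = i ∨ l = i+1 ∨ l = i+1+1 ∨ l = i+1+1+1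
        case neg =>
          push_neg at hl
          exact ⟨l, Or.inr (Or.inr (Or.inl rfl)), hl.1, hl.2.1, hl.2.2.1, hl.2.2.2⟩
        rcases hl with h3 | h3 | h3 | h3
        · exact absurd h3.symm d2
        · exact absurd h3 hkl.1
        · exact absurd h3.symm d4
        · subst h3
          exact ⟨i+1+1+1+1, Or.inr (Or.inr (Or.inr rfl)), ne4 hn i, ne3 hn (i+1),
            ne2 hn (i+1+1), ne1 hn (i+1+1+1)⟩
      · exact absurd (add_right_cancel h2).symm hij.2.1
    · exact absurd hk.symm d3
    · subst hk
      by_cases hk2 : j+1+1 = i ∨ j+1+1 = i+1 ∨ j+1+1 = j ∨ j+1+1 = j+1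
      case neg =>
        push_neg at hk2
        exact ⟨j+1+1, Or.inr (Or.inl rfl), hk2.1, hk2.2.1, hk2.2.2.1, hk2.2.2.2⟩
      rcases hk2 with h2 | h2 | h2 | h2
      · subst h2
        by_cases hl : l = j+1+1 ∨ l = j+1+1+1 ∨ l = j ∨ l = j+1
        case neg =>
          push_neg at hl
          exact ⟨l, Or.inr (Or.inr (Or.inl rfl)), hl.1, hl.2.1, hl.2.2.1, hl.2.2.2⟩
        rcases hl with h3 | h3 | h3 | h3
        · exact absurd h3.symm d2
        · subst h3
          exact ⟨j+1+1+1+1, Or.inr (Or.inr (Or.inr rfl)), ne2 hn (j+1+1),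
            ne1 hn (j+1+1+1), ne4 hn j, ne3 hn (j+1)⟩
        · exact absurd h3.symm d4
        · exact absurd h3 hkl.1
      · exact absurd (add_right_cancel h2) (Ne.symm hij.2.2)
      · exact absurd h2 (ne2 hn j)
      · exact absurd (add_right_cancel h2) (ne1 hn j)
  obtain ⟨y0, hyY, hy1, hy2, hy3, hy4⟩ := hy0
  have my0 : ((tg n i * tg n j) * (tg n k * tg n l)) y0 ≠ y0 := by
    intro hfix
    have hBA := fix_imp hA2 y0 hfix
    rw [dt_o hy1 hy2 hy3 hy4] at hBA
    rcases hyY with hy | hy | hy | hy <;> rw [hy] at hBA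
    · rw [dt_i hn hkl] at hBA; exact ne1 hn k hBA
    · rw [dt_i1 hn hkl] at hBA; exact ne1 hn k hBA.symm
    · rw [dt_j hkl] at hBA; exact ne1 hn l hBA
    · rw [dt_j1 hkl] at hBA; exact ne1 hn l hBA.symm
  have hsub : ({i, i+1, j, j+1, y0} : Finset (Fin n)) ⊆ (tg n p * tg n q).support := by
    intro x hx
    rw [Equiv.Perm.mem_support, ← h]
    simp only [Finset.mem_insert, Finset.mem_singleton] at hx
    rcases hx with rfl | rfl | rfl | rfl | rfl
    · exact mi
    · exact mi1
    · exact mj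
    · exact mj1
    · exact my0
  have hcard5 : ({i, i+1, j, j+1, y0} : Finset (Fin n)).card = 5 := by
    have n1 : i ∉ ({i+1, j, j+1, y0} : Finset (Fin n)) := by
      simp only [Finset.mem_insert, Finset.mem_singleton]
      push_neg
      exact ⟨Ne.symm (ne1 hn i), Ne.symm hij.1, hij.2.2, Ne.symm hy1⟩
    have n2 : i + 1 ∉ ({j, j+1, y0} : Finset (Fin n)) := by
      simp only [Finset.mem_insert, Finset.mem_singleton]
      push_neg
      exact ⟨Ne.symm hij.2.1, succ_ne_succ (Ne.symm hij.1), Ne.symm hy2⟩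
    have n3 : j ∉ ({j+1, y0} : Finset (Fin n)) := by
      simp only [Finset.mem_insert, Finset.mem_singleton]
      push_neg
      exact ⟨Ne.symm (ne1 hn j), Ne.symm hy3⟩
    have n4 : j + 1 ∉ ({y0} : Finset (Fin n)) := by
      simp only [Finset.mem_singleton]
      exact Ne.symm hy4
    rw [Finset.card_insert_of_notMem n1, Finset.card_insert_of_notMem n2,
      Finset.card_insert_of_notMem n3, Finset.card_insert_of_notMem n4, Finset.card_singleton]
  have hub : (tg n p * tg n q).support.card ≤ 4 := by
    have h1 := Equiv.Perm.support_mul_le (tg n p) (tg n q)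
    have h2 : (tg n p).support.card ≤ 2 := by
      rw [tg, Equiv.Perm.support_swap (Ne.symm (ne1 hn p))]
      exact Finset.card_insert_le _ _ |>.trans (by simp)
    have h3 : (tg n q).support.card ≤ 2 := by
      rw [tg, Equiv.Perm.support_swap (Ne.symm (ne1 hn q))]
      exact Finset.card_insert_le _ _ |>.trans (by simp)
    calc (tg n p * tg n q).support.card ≤ ((tg n p).support ∪ (tg n q).support).card :=
          Finset.card_le_card h1
      _ ≤ (tg n p).support.card + (tg n q).support.card := Finset.card_union_le _ _
      _ ≤ 4 := by omega
  have := Finset.card_le_card hsub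
  omega


omit hn in
lemma tg_tg_cancel (i : Fin n) (c : Equiv.Perm (Fin n)) : tg n i * (tg n i * c) = c := by
  rw [← mul_assoc, tg_mul_self, one_mul]

/-- adjacency in the modified bubble-sort graph, algebraic form -/
def Ad (n : ℕ) [NeZero n] (u v : Equiv.Perm (Fin n)) : Prop :=
  u ≠ v ∧ ∃ i, v = u * tg n i

omit hn in
lemma ad_symm {u v : Equiv.Perm (Fin n)} (h : Ad n u v) : Ad n v u := by
  obtain ⟨hne, i, rfl⟩ := h
  exact ⟨hne.symm, i, by rw [mul_assoc, tg_mul_self, mul_one]⟩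

omit hn in
lemma ad_irrefl (u : Equiv.Perm (Fin n)) : ¬ Ad n u u := fun h => h.1 rfl

lemma ad_of_mul (u : Equiv.Perm (Fin n)) (i : Fin n) : Ad n u (u * tg n i) := by
  refine ⟨fun h => tg_ne_one hn i ?_, i, rfl⟩
  have := mul_left_cancel (a := u) ((mul_one u).trans h)
  exact this.symm

lemma deg_eq (u : Equiv.Perm (Fin n)) :
    (Finset.univ.filter (fun w => Ad n u w)).card = n := by
  have himg : Finset.univ.filter (fun w => Ad n u w) =
      Finset.image (fun i => u * tg n i) Finset.univ := by
    ext w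
    simp only [Finset.mem_filter, Finset.mem_univ, true_and, Finset.mem_image]
    constructor
    · rintro ⟨hne, i, rfl⟩; exact ⟨i, rfl⟩
    · rintro ⟨i, rfl⟩
      exact ad_of_mul hn u i
  rw [himg, Finset.card_image_of_injective _ ?_, Finset.card_univ, Fintype.card_fin]
  intro i j hij
  exact tg_inj hn (mul_left_cancel hij)

lemma ad_sign {u v : Equiv.Perm (Fin n)} (h : Ad n u v) :
    Equiv.Perm.sign v = - Equiv.Perm.sign u := by
  obtain ⟨_, i, rfl⟩ := h
  rw [map_mul, tg_sign hn, mul_neg_one]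

lemma not_ad_same_sign {u v : Equiv.Perm (Fin n)}
    (h : Equiv.Perm.sign u = Equiv.Perm.sign v) : ¬ Ad n u v := by
  intro had
  have h2 := ad_sign hn had
  rw [← h] at h2
  rcases Int.units_eq_one_or (Equiv.Perm.sign u) with h3 | h3 <;> rw [h3] at h2 <;>
    exact absurd h2 (by decide)

omit hn in
lemma common_ratio {u v w : Equiv.Perm (Fin n)} (h1 : Ad n u w) (h2 : Ad n v w) :
    ∃ p q, w = u * tg n p ∧ v = u * (tg n p * tg n q) := by
  obtain ⟨hne1, p, rfl⟩ := h1
  obtain ⟨hne2, q, hq⟩ := h2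
  refine ⟨p, q, rfl, ?_⟩
  rw [← mul_assoc, hq, mul_assoc, tg_mul_self, mul_one]

omit hn in
lemma ratio_ne {u v : Equiv.Perm (Fin n)} {p q : Fin n} (huv : u ≠ v)
    (h : v = u * (tg n p * tg n q)) : p ≠ q := by
  rintro rfl
  rw [tg_mul_self, mul_one] at h
  exact huv h.symm

lemma three_common {u v w1 w2 w3 : Equiv.Perm (Fin n)} (huv : u ≠ v)
    (h1 : Ad n u w1 ∧ Ad n v w1) (h2 : Ad n u w2 ∧ Ad n v w2) (h3 : Ad n u w3 ∧ Ad n v w3)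
    (d12 : w1 ≠ w2) (d13 : w1 ≠ w3) (d23 : w2 ≠ w3) : False := by
  obtain ⟨p1, q1, hw1, hv1⟩ := common_ratio h1.1 h1.2
  obtain ⟨p2, q2, hw2, hv2⟩ := common_ratio h2.1 h2.2
  obtain ⟨p3, q3, hw3, hv3⟩ := common_ratio h3.1 h3.2
  have hp1q1 : p1 ≠ q1 := ratio_ne huv hv1
  have E12 : tg n p1 * tg n q1 = tg n p2 * tg n q2 :=
    mul_left_cancel (hv1.symm.trans hv2)
  have E13 : tg n p1 * tg n q1 = tg n p3 * tg n q3 :=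
    mul_left_cancel (hv1.symm.trans hv3)
  have hp12 : p1 ≠ p2 := by
    rintro rfl; exact d12 (hw1.symm ▸ hw2.symm ▸ rfl)
  have hp13 : p1 ≠ p3 := by
    rintro rfl; exact d13 (hw1.symm ▸ hw3.symm ▸ rfl)
  rcases UF hn hp1q1 E12 with ⟨hk, _⟩ | ⟨hk2, _, _⟩
  · exact hp12 hk.symm
  rcases UF hn hp1q1 E13 with ⟨hk3, _⟩ | ⟨hk4, _, _⟩
  · exact hp13 hk3.symm
  · exact d23 (by rw [hw2, hw3, hk2, hk4])

/-- number of common neighbours outside A -/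
noncomputable def cP (A : Finset (Equiv.Perm (Fin n))) (u v : Equiv.Perm (Fin n)) : ℕ :=
  ((Finset.univ \ A).filter (fun w => Ad n u w ∧ Ad n v w)).card

omit hn in
lemma cP_comm (A : Finset (Equiv.Perm (Fin n))) (u v : Equiv.Perm (Fin n)) :
    cP A u v = cP A v u := by
  unfold cP
  congr 1
  apply Finset.filter_congr
  intro w _
  exact ⟨fun h => ⟨h.2, h.1⟩, fun h => ⟨h.2, h.1⟩⟩

lemma cP_le_two {A : Finset (Equiv.Perm (Fin n))} {u v : Equiv.Perm (Fin n)} (huv : u ≠ v) :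
    cP A u v ≤ 2 := by
  by_contra hc
  push_neg at hc
  obtain ⟨w1, w2, w3, hm1, hm2, hm3, d12, d13, d23⟩ := Finset.two_lt_card_iff.mp hc
  rw [Finset.mem_filter] at hm1 hm2 hm3
  exact three_common hn huv hm1.2 hm2.2 hm3.2 d12 d13 d23

lemma cP_le_one {A : Finset (Equiv.Perm (Fin n))} {u v s : Equiv.Perm (Fin n)} (huv : u ≠ v)
    (hs : s ∈ A) (h1 : Ad n u s) (h2 : Ad n v s) : cP A u v ≤ 1 := by
  by_contra hc
  push_neg at hc
  obtain ⟨w1, hm1, w2, hm2, d12⟩ := Finset.one_lt_card.mp hc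
  rw [Finset.mem_filter, Finset.mem_sdiff] at hm1 hm2
  have dw1 : w1 ≠ s := fun hh => hm1.1.2 (hh ▸ hs)
  have dw2 : w2 ≠ s := fun hh => hm2.1.2 (hh ▸ hs)
  exact three_common hn huv hm1.2 hm2.2 ⟨h1, h2⟩ d12 dw1 dw2

lemma cP_eq_zero {A : Finset (Equiv.Perm (Fin n))} {u v s1 s2 : Equiv.Perm (Fin n)} (huv : u ≠ v)
    (hs1 : s1 ∈ A) (hs2 : s2 ∈ A) (hss : s1 ≠ s2)
    (h1 : Ad n u s1) (h2 : Ad n v s1) (h3 : Ad n u s2) (h4 : Ad n v s2) : cP A u v = 0 := by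
  by_contra hc
  obtain ⟨w, hw⟩ := Finset.card_pos.mp (Nat.pos_of_ne_zero hc)
  rw [Finset.mem_filter, Finset.mem_sdiff] at hw
  have dw1 : w ≠ s1 := fun hh => hw.1.2 (hh ▸ hs1)
  have dw2 : w ≠ s2 := fun hh => hw.1.2 (hh ▸ hs2)
  exact three_common hn huv hw.2 ⟨h1, h2⟩ ⟨h3, h4⟩ dw1 dw2 hss

lemma cP_sign {A : Finset (Equiv.Perm (Fin n))} {u v : Equiv.Perm (Fin n)}
    (h : Equiv.Perm.sign u ≠ Equiv.Perm.sign v) : cP A u v = 0 := by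
  rw [cP, Finset.card_eq_zero, Finset.filter_eq_empty_iff]
  intro w _
  rintro ⟨ha1, ha2⟩
  exact h (neg_inj.mp ((ad_sign hn ha1).symm.trans (ad_sign hn ha2)))

lemma full_DT {A : Finset (Equiv.Perm (Fin n))} {u v : Equiv.Perm (Fin n)} (huv : u ≠ v)
    (h : 2 ≤ cP A u v) : ∃ i j, Far i j ∧ v = u * (tg n i * tg n j) := by
  obtain ⟨w1, hm1, w2, hm2, d12⟩ := Finset.one_lt_card.mp (by omega : 1 < cP A u v)
  rw [Finset.mem_filter] at hm1 hm2
  obtain ⟨p1, q1, hw1, hv1⟩ := common_ratio hm1.2.1 hm1.2.2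
  obtain ⟨p2, q2, hw2, hv2⟩ := common_ratio hm2.2.1 hm2.2.2
  have hp1q1 : p1 ≠ q1 := ratio_ne huv hv1
  have E12 : tg n p1 * tg n q1 = tg n p2 * tg n q2 := mul_left_cancel (hv1.symm.trans hv2)
  have hp12 : p1 ≠ p2 := by
    rintro rfl; exact d12 (hw1.symm ▸ hw2.symm ▸ rfl)
  rcases UF hn hp1q1 E12 with ⟨hk, _⟩ | ⟨_, _, hfar⟩
  · exact absurd hk.symm hp12
  · exact ⟨p1, q1, hfar, hv1⟩

lemma cP_pos {A : Finset (Equiv.Perm (Fin n))} {u v : Equiv.Perm (Fin n)} (huv : u ≠ v)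
    (h : 1 ≤ cP A u v) : ∃ p q, p ≠ q ∧ v = u * (tg n p * tg n q) := by
  obtain ⟨w, hw⟩ := Finset.card_pos.mp h
  rw [Finset.mem_filter] at hw
  obtain ⟨p, q, _, hv⟩ := common_ratio hw.2.1 hw.2.2
  exact ⟨p, q, ratio_ne huv hv, hv⟩

/-- the witness lemma: two "full" pairs around y plus any common neighbour of x,z
gives a vertex adjacent to all of x,y,z -/
lemma shareW {A : Finset (Equiv.Perm (Fin n))} {x y z : Equiv.Perm (Fin n)}
    (hxy : x ≠ y) (hyz : y ≠ z) (hxz : x ≠ z)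
    (f1 : 2 ≤ cP A x y) (f2 : 2 ≤ cP A y z) (f3 : 1 ≤ cP A x z) :
    ∃ w, Ad n x w ∧ Ad n y w ∧ Ad n z w := by
  obtain ⟨i, j, hij, hy⟩ := full_DT hn hxy f1
  obtain ⟨k, l, hkl, hz⟩ := full_DT hn hyz f2
  obtain ⟨p, q, hpq, hz2⟩ := cP_pos hn hxz f3
  have hprod : tg n i * tg n j * (tg n k * tg n l) = tg n p * tg n q := by
    apply mul_left_cancel (a := x)
    rw [← hz2, hz, hy]
    simp only [mul_assoc]
  -- extract a shared index s with y = x * (tg a * tg s), z = y * (tg s * tg b)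
  have hnorm : ∃ a s b, y = x * (tg n a * tg n s) ∧ z = y * (tg n s * tg n b) := by
    by_cases hik : i = k
    · exact ⟨j, i, l, by rw [hy, far_commute hij], by rw [hz, hik]⟩
    by_cases hil : i = l
    · exact ⟨j, i, k, by rw [hy, far_commute hij], by rw [hz, far_commute hkl, hil]⟩
    by_cases hjk : j = k
    · exact ⟨i, j, l, by rw [hy], by rw [hz, hjk]⟩
    by_cases hjl : j = l
    · exact ⟨i, j, k, by rw [hy], by rw [hz, far_commute hkl, hjl]⟩
    · exact absurd hprod (master hn hij hkl hik hil hjk hjl p q)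
  obtain ⟨a, s, b, hyx, hzy⟩ := hnorm
  refine ⟨x * tg n a, ad_of_mul hn x a, ?_, ?_⟩
  · have hw2 : x * tg n a = y * tg n s := by
      simp only [hyx, mul_assoc, tg_tg_cancel, tg_mul_self, mul_one]
    rw [hw2]
    exact ad_of_mul hn y s
  · have hw3 : x * tg n a = z * tg n b := by
      simp only [hzy, hyx, mul_assoc, tg_tg_cancel, tg_mul_self, mul_one]
    rw [hw3]
    exact ad_of_mul hn z b


/-- indicator -/
noncomputable def iN (P : Prop) : ℕ := if P then 1 else 0

omit hn in
lemma iN_le_one (P : Prop) : iN P ≤ 1 := by unfold iN; split <;> omega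

omit hn in
lemma iN_true {P : Prop} (h : P) : iN P = 1 := if_pos h

omit hn in
lemma iN_false {P : Prop} (h : ¬P) : iN P = 0 := if_neg h

omit hn in
lemma ite_eq_iN (P : Prop) [Decidable P] : (if P then (1:ℕ) else 0) = iN P := by
  by_cases h : P
  · rw [if_pos h, iN_true h]
  · rw [if_neg h, iN_false h]

/-- the 4-set -/
def AS (a b c d : Equiv.Perm (Fin n)) : Finset (Equiv.Perm (Fin n)) := {a, b, c, d}

/-- degree into the 4-set -/
noncomputable def gdeg (n : ℕ) [NeZero n] (a b c d w : Equiv.Perm (Fin n)) : ℕ :=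
  iN (Ad n a w) + iN (Ad n b w) + iN (Ad n c w) + iN (Ad n d w)

noncomputable def wt (n : ℕ) [NeZero n] (a b c d w : Equiv.Perm (Fin n)) : ℕ :=
  if 4 ≤ gdeg n a b c d w then 3 else 1

noncomputable def pp (n : ℕ) [NeZero n] (a b c d w : Equiv.Perm (Fin n)) : ℕ :=
  iN (Ad n a w ∧ Ad n b w) + iN (Ad n a w ∧ Ad n c w) + iN (Ad n a w ∧ Ad n d w) +
  iN (Ad n b w ∧ Ad n c w) + iN (Ad n b w ∧ Ad n d w) + iN (Ad n c w ∧ Ad n d w)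

noncomputable def NS (n : ℕ) [NeZero n] (a b c d : Equiv.Perm (Fin n)) :
    Finset (Equiv.Perm (Fin n)) :=
  (Finset.univ \ AS a b c d).filter
    (fun w => Ad n a w ∨ Ad n b w ∨ Ad n c w ∨ Ad n d w)

noncomputable def E6 (n : ℕ) [NeZero n] (a b c d : Equiv.Perm (Fin n)) : ℕ :=
  ∑ v ∈ AS a b c d, gdeg n a b c d v

noncomputable def P6 (n : ℕ) [NeZero n] (a b c d : Equiv.Perm (Fin n)) : ℕ :=
  cP (AS a b c d) a b + cP (AS a b c d) a c + cP (AS a b c d) a d +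
  cP (AS a b c d) b c + cP (AS a b c d) b d + cP (AS a b c d) c d

omit hn in
lemma gdeg4 {a b c d w : Equiv.Perm (Fin n)} (h : 4 ≤ gdeg n a b c d w) :
    Ad n a w ∧ Ad n b w ∧ Ad n c w ∧ Ad n d w := by
  unfold gdeg at h
  by_cases h1 : Ad n a w <;> by_cases h2 : Ad n b w <;> by_cases h3 : Ad n c w <;>
    by_cases h4 : Ad n d w <;>
    simp only [iN_true, iN_false, h1, h2, h3, h4, not_false_iff] at h <;>
    first | exact ⟨h1, h2, h3, h4⟩ | omega

/-- the master counting inequality -/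
lemma master_count {a b c d : Equiv.Perm (Fin n)} (W : Finset (Equiv.Perm (Fin n)))
    (hW : ∀ w ∈ W, w ∈ Finset.univ \ AS a b c d ∧ 3 ≤ gdeg n a b c d w) :
    4 * n + ∑ w ∈ W, wt n a b c d w ≤ (NS n a b c d).card + P6 n a b c d + E6 n a b c d := by
  have hWsub : W ⊆ Finset.univ \ AS a b c d := fun w hw => (hW w hw).1
  have hpt : ∀ w ∈ Finset.univ \ AS a b c d,
      gdeg n a b c d w + (if w ∈ W then wt n a b c d w else 0) ≤
        (if w ∈ NS n a b c d then 1 else 0) + pp n a b c d w := by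
    intro w hw
    have hNS : (w ∈ NS n a b c d) ↔ (Ad n a w ∨ Ad n b w ∨ Ad n c w ∨ Ad n d w) := by
      rw [NS, Finset.mem_filter]
      simp [hw]
    by_cases hW' : w ∈ W
    · have hg3 := (hW w hW').2
      by_cases h1 : Ad n a w <;> by_cases h2 : Ad n b w <;> by_cases hc3 : Ad n c w <;>
        by_cases h4 : Ad n d w <;>
        (try simp [iN, gdeg, pp, wt, hNS, h1, h2, hc3, h4, hW'] at hg3 ⊢) <;> omega
    · by_cases h1 : Ad n a w <;> by_cases h2 : Ad n b w <;> by_cases hc3 : Ad n c w <;>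
        by_cases h4 : Ad n d w <;>
        (try simp [iN, gdeg, pp, wt, hNS, h1, h2, hc3, h4, hW']) <;> omega
  have hsum := Finset.sum_le_sum hpt
  rw [Finset.sum_add_distrib, Finset.sum_add_distrib] at hsum
  have hWs : ∑ w ∈ Finset.univ \ AS a b c d, (if w ∈ W then wt n a b c d w else 0)
      = ∑ w ∈ W, wt n a b c d w := by
    rw [Finset.sum_ite_mem, Finset.inter_eq_right.mpr hWsub]
  have hNSs : ∑ w ∈ Finset.univ \ AS a b c d, (if w ∈ NS n a b c d then 1 else 0)
      = (NS n a b c d).card := by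
    have hsub2 : NS n a b c d ⊆ Finset.univ \ AS a b c d := Finset.filter_subset _ _
    rw [Finset.sum_ite_mem, Finset.inter_eq_right.mpr hsub2]
    simp
  have hpps : ∑ w ∈ Finset.univ \ AS a b c d, pp n a b c d w = P6 n a b c d := by
    unfold P6 cP
    simp only [Finset.card_filter, ite_eq_iN]
    rw [← Finset.sum_add_distrib, ← Finset.sum_add_distrib, ← Finset.sum_add_distrib,
      ← Finset.sum_add_distrib, ← Finset.sum_add_distrib]
    apply Finset.sum_congr rfl
    intro w _
    simp [pp]
  have hgs : ∑ w ∈ Finset.univ \ AS a b c d, gdeg n a b c d w + E6 n a b c d = 4 * n := by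
    rw [E6, Finset.sum_sdiff (Finset.subset_univ _)]
    unfold gdeg
    rw [Finset.sum_add_distrib, Finset.sum_add_distrib, Finset.sum_add_distrib]
    have hdg : ∀ u : Equiv.Perm (Fin n), ∑ w : Equiv.Perm (Fin n), iN (Ad n u w) = n := by
      intro u
      have h0 := deg_eq hn u
      rw [Finset.card_filter] at h0
      simp only [ite_eq_iN] at h0
      exact h0
    rw [hdg, hdg, hdg, hdg]
    ring
  rw [hWs, hNSs, hpps] at hsum
  omega


omit hn in
lemma units_ne_neg (s : ℤˣ) : s ≠ -s := by
  rcases Int.units_eq_one_or s with h | h <;> rw [h] <;> decide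

lemma tri_bound {A : Finset (Equiv.Perm (Fin n))} {x y z : Equiv.Perm (Fin n)}
    (hxy : x ≠ y) (hyz : y ≠ z) (hxz : x ≠ z)
    (hsgx : ∀ v ∈ A, Equiv.Perm.sign v = Equiv.Perm.sign x)
    (hxA : x ∈ A)
    (hT : ((Finset.univ \ A).filter (fun w => Ad n x w ∧ Ad n y w ∧ Ad n z w)) = ∅) :
    cP A x y + cP A y z + cP A x z ≤ 4 := by
  have noW : ∀ w, ¬(Ad n x w ∧ Ad n y w ∧ Ad n z w) := by
    intro w hw
    have hwA : w ∉ A := by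
      intro hmem
      have h1 := ad_sign hn hw.1
      rw [hsgx w hmem] at h1
      exact units_ne_neg _ h1
    have hmem : w ∈ (Finset.univ \ A).filter (fun w => Ad n x w ∧ Ad n y w ∧ Ad n z w) :=
      Finset.mem_filter.mpr ⟨Finset.mem_sdiff.mpr ⟨Finset.mem_univ w, hwA⟩, hw⟩
    rw [hT] at hmem
    exact Finset.notMem_empty w hmem
  have c1 : cP A x y ≤ 2 := cP_le_two hn hxy
  have c2 : cP A y z ≤ 2 := cP_le_two hn hyz
  have c3 : cP A x z ≤ 2 := cP_le_two hn hxz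
  by_cases F1 : 2 ≤ cP A x y
  · by_cases F2 : 2 ≤ cP A y z
    · have h0 : cP A x z = 0 := by
        by_contra hpos
        obtain ⟨w, h1, h2, h3⟩ := shareW hn hxy hyz hxz F1 F2 (by omega)
        exact noW w ⟨h1, h2, h3⟩
      omega
    · by_cases F3 : 2 ≤ cP A x z
      · have h0 : cP A y z = 0 := by
          by_contra hpos
          obtain ⟨w, h1, h2, h3⟩ := shareW hn (Ne.symm hxy) hxz hyz
            (by rw [cP_comm]; exact F1) F3 (by omega)
          exact noW w ⟨h2, h1, h3⟩
        omega
      · omega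
  · by_cases F2 : 2 ≤ cP A y z
    · by_cases F3 : 2 ≤ cP A x z
      · have h0 : cP A x y = 0 := by
          by_contra hpos
          obtain ⟨w, h1, h2, h3⟩ := shareW hn hxz (Ne.symm hyz) hxy F3
            (by rw [cP_comm]; exact F2) (by omega)
          exact noW w ⟨h1, h3, h2⟩
        omega
      · omega
    · omega

lemma caseA {a b c d : Equiv.Perm (Fin n)}
    (dab : a ≠ b) (dac : a ≠ c) (dad : a ≠ d) (dbc : b ≠ c) (dbd : b ≠ d) (dcd : c ≠ d)
    (sb : Equiv.Perm.sign b = Equiv.Perm.sign a)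
    (sc : Equiv.Perm.sign c = Equiv.Perm.sign a)
    (sd : Equiv.Perm.sign d = Equiv.Perm.sign a) :
    ∃ W, (∀ w ∈ W, w ∈ Finset.univ \ AS a b c d ∧ 3 ≤ gdeg n a b c d w) ∧
      P6 n a b c d + E6 n a b c d ≤ 9 + ∑ w ∈ W, wt n a b c d w := by
  have hsgA : ∀ v ∈ AS a b c d, Equiv.Perm.sign v = Equiv.Perm.sign a := by
    intro v hv
    simp only [AS, Finset.mem_insert, Finset.mem_singleton] at hv
    rcases hv with rfl | rfl | rfl | rfl
    · rfl
    · exact sb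
    · exact sc
    · exact sd
  have haA : a ∈ AS a b c d := by simp [AS]
  have hbA : b ∈ AS a b c d := by simp [AS]
  have hE : E6 n a b c d = 0 := by
    apply Finset.sum_eq_zero
    intro v hv
    have hsv := hsgA v hv
    have hna : ∀ u, u ∈ AS a b c d → ¬ Ad n u v := fun u hu =>
      not_ad_same_sign hn (by rw [hsgA u hu, hsv])
    rw [gdeg, iN_false (hna a haA), iN_false (hna b hbA),
      iN_false (hna c (by simp [AS])), iN_false (hna d (by simp [AS]))]
    rfl
  have c1 : cP (AS a b c d) a b ≤ 2 := cP_le_two hn dab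
  have c2 : cP (AS a b c d) a c ≤ 2 := cP_le_two hn dac
  have c3 : cP (AS a b c d) a d ≤ 2 := cP_le_two hn dad
  have c4 : cP (AS a b c d) b c ≤ 2 := cP_le_two hn dbc
  have c5 : cP (AS a b c d) b d ≤ 2 := cP_le_two hn dbd
  have c6 : cP (AS a b c d) c d ≤ 2 := cP_le_two hn dcd
  by_cases h4 : ∃ w ∈ Finset.univ \ AS a b c d, Ad n a w ∧ Ad n b w ∧ Ad n c w ∧ Ad n d w
  · obtain ⟨w0, hw0mem, ha, hb, hc, hd⟩ := h4
    have hg4 : gdeg n a b c d w0 = 4 := by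
      rw [gdeg, iN_true ha, iN_true hb, iN_true hc, iN_true hd]
    refine ⟨{w0}, ?_, ?_⟩
    · intro w hw
      rw [Finset.mem_singleton] at hw
      subst hw
      exact ⟨hw0mem, by omega⟩
    · have hwt : wt n a b c d w0 = 3 := if_pos (by omega)
      rw [Finset.sum_singleton, hwt, hE, P6]
      omega
  · set W := (Finset.univ \ AS a b c d).filter (fun w => 3 ≤ gdeg n a b c d w) with hWdef
    refine ⟨W, fun w hw => by rw [hWdef, Finset.mem_filter] at hw; exact hw, ?_⟩
    have hwt1 : ∀ w ∈ W, wt n a b c d w = 1 := by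
      intro w hw
      rw [wt, if_neg]
      intro hge4
      obtain ⟨ha, hb, hc, hd⟩ := gdeg4 hge4
      rw [hWdef, Finset.mem_filter] at hw
      exact h4 ⟨w, hw.1, ha, hb, hc, hd⟩
    have hsumW : ∑ w ∈ W, wt n a b c d w = W.card := by
      rw [Finset.sum_congr rfl hwt1]
      exact (Finset.card_eq_sum_ones W).symm
    set T1 := (Finset.univ \ AS a b c d).filter
      (fun w => Ad n a w ∧ Ad n b w ∧ Ad n c w) with hT1def
    set T2 := (Finset.univ \ AS a b c d).filter
      (fun w => Ad n a w ∧ Ad n b w ∧ Ad n d w) with hT2def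
    set T3 := (Finset.univ \ AS a b c d).filter
      (fun w => Ad n a w ∧ Ad n c w ∧ Ad n d w) with hT3def
    set T4 := (Finset.univ \ AS a b c d).filter
      (fun w => Ad n b w ∧ Ad n c w ∧ Ad n d w) with hT4def
    have hb1 : cP (AS a b c d) a b + cP (AS a b c d) b c + cP (AS a b c d) a c
        ≤ 4 + 2 * min T1.card 1 := by
      by_cases hT : T1 = ∅
      · have := tri_bound hn dab dbc dac hsgA haA hT
        omega
      · have hc1 : 1 ≤ T1.card := Finset.card_pos.mpr (Finset.nonempty_of_ne_empty hT)
        have : min T1.card 1 = 1 := by omega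
        omega
    have hb2 : cP (AS a b c d) a b + cP (AS a b c d) b d + cP (AS a b c d) a d
        ≤ 4 + 2 * min T2.card 1 := by
      by_cases hT : T2 = ∅
      · have := tri_bound hn dab dbd dad hsgA haA hT
        omega
      · have hc1 : 1 ≤ T2.card := Finset.card_pos.mpr (Finset.nonempty_of_ne_empty hT)
        have : min T2.card 1 = 1 := by omega
        omega
    have hb3 : cP (AS a b c d) a c + cP (AS a b c d) c d + cP (AS a b c d) a d
        ≤ 4 + 2 * min T3.card 1 := by
      by_cases hT : T3 = ∅
      · have := tri_bound hn dac dcd dad hsgA haA hT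
        omega
      · have hc1 : 1 ≤ T3.card := Finset.card_pos.mpr (Finset.nonempty_of_ne_empty hT)
        have : min T3.card 1 = 1 := by omega
        omega
    have hb4 : cP (AS a b c d) b c + cP (AS a b c d) c d + cP (AS a b c d) b d
        ≤ 4 + 2 * min T4.card 1 := by
      by_cases hT : T4 = ∅
      · have := tri_bound hn dbc dcd dbd
          (fun v hv => by rw [hsgA v hv, sb]) hbA hT
        omega
      · have hc1 : 1 ≤ T4.card := Finset.card_pos.mpr (Finset.nonempty_of_ne_empty hT)
        have : min T4.card 1 = 1 := by omega
        omega
    -- the four triangle witness sets are disjoint subsets of W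
    have hsub : ∀ w, (w ∈ T1 → w ∈ Finset.univ \ AS a b c d ∧ Ad n a w ∧ Ad n b w ∧ Ad n c w)
        ∧ (w ∈ T2 → w ∈ Finset.univ \ AS a b c d ∧ Ad n a w ∧ Ad n b w ∧ Ad n d w)
        ∧ (w ∈ T3 → w ∈ Finset.univ \ AS a b c d ∧ Ad n a w ∧ Ad n c w ∧ Ad n d w)
        ∧ (w ∈ T4 → w ∈ Finset.univ \ AS a b c d ∧ Ad n b w ∧ Ad n c w ∧ Ad n d w) := by
      intro w
      refine ⟨fun hw => ?_, fun hw => ?_, fun hw => ?_, fun hw => ?_⟩ <;>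
        [rw [hT1def, Finset.mem_filter] at hw; rw [hT2def, Finset.mem_filter] at hw;
         rw [hT3def, Finset.mem_filter] at hw; rw [hT4def, Finset.mem_filter] at hw] <;>
        exact ⟨hw.1, hw.2.1, hw.2.2.1, hw.2.2.2⟩
    have hs1 : T1 ⊆ W := by
      intro w hw
      obtain ⟨hm, h1, h2, h3⟩ := (hsub w).1 hw
      rw [hWdef, Finset.mem_filter]
      refine ⟨hm, ?_⟩
      rw [gdeg, iN_true h1, iN_true h2, iN_true h3]
      omega
    have hs2 : T2 ⊆ W := by
      intro w hw
      obtain ⟨hm, h1, h2, h3⟩ := (hsub w).2.1 hw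
      rw [hWdef, Finset.mem_filter]
      refine ⟨hm, ?_⟩
      rw [gdeg, iN_true h1, iN_true h2, iN_true h3]
      omega
    have hs3 : T3 ⊆ W := by
      intro w hw
      obtain ⟨hm, h1, h2, h3⟩ := (hsub w).2.2.1 hw
      rw [hWdef, Finset.mem_filter]
      refine ⟨hm, ?_⟩
      rw [gdeg, iN_true h1, iN_true h2, iN_true h3]
      omega
    have hs4 : T4 ⊆ W := by
      intro w hw
      obtain ⟨hm, h1, h2, h3⟩ := (hsub w).2.2.2 hw
      rw [hWdef, Finset.mem_filter]
      refine ⟨hm, ?_⟩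
      rw [gdeg, iN_true h1, iN_true h2, iN_true h3]
      omega
    have hd12 : Disjoint T1 T2 := by
      rw [Finset.disjoint_left]
      intro w hws hwt
      obtain ⟨hm, h1, h2, h3⟩ := (hsub w).1 hws
      obtain ⟨_, _, _, h4'⟩ := (hsub w).2.1 hwt
      exact h4 ⟨w, hm, h1, h2, h3, h4'⟩
    have hd34 : Disjoint T3 T4 := by
      rw [Finset.disjoint_left]
      intro w hws hwt
      obtain ⟨hm, h1, h2, h3⟩ := (hsub w).2.2.1 hws
      obtain ⟨_, h1', _, _⟩ := (hsub w).2.2.2 hwt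
      exact h4 ⟨w, hm, h1, h1', h2, h3⟩
    have hd1234 : Disjoint (T1 ∪ T2) (T3 ∪ T4) := by
      rw [Finset.disjoint_union_left]
      constructor <;> rw [Finset.disjoint_union_right] <;> constructor <;>
        rw [Finset.disjoint_left] <;> intro w hws hwt
      · obtain ⟨hm, h1, h2, h3⟩ := (hsub w).1 hws
        obtain ⟨_, _, _, h4'⟩ := (hsub w).2.2.1 hwt
        exact h4 ⟨w, hm, h1, h2, h3, h4'⟩
      · obtain ⟨hm, h1, h2, h3⟩ := (hsub w).1 hws
        obtain ⟨_, _, _, h4'⟩ := (hsub w).2.2.2 hwt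
        exact h4 ⟨w, hm, h1, h2, h3, h4'⟩
      · obtain ⟨hm, h1, h2, h3⟩ := (hsub w).2.1 hws
        obtain ⟨_, _, h2', _⟩ := (hsub w).2.2.1 hwt
        exact h4 ⟨w, hm, h1, h2, h2', h3⟩
      · obtain ⟨hm, h1, h2, h3⟩ := (hsub w).2.1 hws
        obtain ⟨_, _, h2', _⟩ := (hsub w).2.2.2 hwt
        exact h4 ⟨w, hm, h1, h2, h2', h3⟩
    have hcards : T1.card + T2.card + T3.card + T4.card ≤ W.card := by
      have e1 : (T1 ∪ T2).card = T1.card + T2.card := Finset.card_union_of_disjoint hd12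
      have e2 : (T3 ∪ T4).card = T3.card + T4.card := Finset.card_union_of_disjoint hd34
      have e3 : ((T1 ∪ T2) ∪ (T3 ∪ T4)).card = (T1 ∪ T2).card + (T3 ∪ T4).card :=
        Finset.card_union_of_disjoint hd1234
      have e4 : (T1 ∪ T2) ∪ (T3 ∪ T4) ⊆ W := by
        apply Finset.union_subset <;> apply Finset.union_subset <;> assumption
      have := Finset.card_le_card e4
      omega
    have m1 : min T1.card 1 ≤ T1.card := Nat.min_le_left _ _
    have m2 : min T2.card 1 ≤ T2.card := Nat.min_le_left _ _
    have m3 : min T3.card 1 ≤ T3.card := Nat.min_le_left _ _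
    have m4 : min T4.card 1 ≤ T4.card := Nat.min_le_left _ _
    rw [hE, hsumW, P6]
    omega


omit hn in
lemma iN_congr {P Q : Prop} (h : P ↔ Q) : iN P = iN Q := by
  by_cases hp : P
  · rw [iN_true hp, iN_true (h.mp hp)]
  · rw [iN_false hp, iN_false (fun hq => hp (h.mpr hq))]

omit hn in
lemma iN_and (P Q : Prop) : iN P + iN Q ≤ 1 + iN (P ∧ Q) := by
  by_cases p : P <;> by_cases q : Q <;>
    simp [iN_true, iN_false, p, q, iN_false (P := P ∧ Q)]

lemma cP_bound2 {A : Finset (Equiv.Perm (Fin n))} {u v s t : Equiv.Perm (Fin n)}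
    (huv : u ≠ v) (hs : s ∈ A) (ht : t ∈ A) (hst : s ≠ t) :
    cP A u v + iN (Ad n u s ∧ Ad n v s) + iN (Ad n u t ∧ Ad n v t) ≤ 2 := by
  by_cases h1 : Ad n u s ∧ Ad n v s <;> by_cases h2 : Ad n u t ∧ Ad n v t
  · rw [cP_eq_zero hn huv hs ht hst h1.1 h1.2 h2.1 h2.2, iN_true h1, iN_true h2]
  · rw [iN_true h1, iN_false h2]
    have := cP_le_one hn huv hs h1.1 h1.2
    omega
  · rw [iN_false h1, iN_true h2]
    have := cP_le_one hn huv ht h2.1 h2.2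
    omega
  · rw [iN_false h1, iN_false h2]
    have := cP_le_two (A := A) hn huv
    omega

lemma E6_expand {a b c d : Equiv.Perm (Fin n)}
    (dab : a ≠ b) (dac : a ≠ c) (dad : a ≠ d) (dbc : b ≠ c) (dbd : b ≠ d) (dcd : c ≠ d) :
    E6 n a b c d = 2 * iN (Ad n a b) + 2 * iN (Ad n a c) + 2 * iN (Ad n a d) +
      2 * iN (Ad n b c) + 2 * iN (Ad n b d) + 2 * iN (Ad n c d) := by
  rw [E6, AS]
  rw [Finset.sum_insert (by simp [dab, dac, dad]),
    Finset.sum_insert (by simp [dbc, dbd]),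
    Finset.sum_insert (by simp [dcd]), Finset.sum_singleton]
  unfold gdeg
  rw [iN_false (ad_irrefl a), iN_false (ad_irrefl b), iN_false (ad_irrefl c),
    iN_false (ad_irrefl d)]
  rw [iN_congr (show Ad n b a ↔ Ad n a b from ⟨ad_symm, ad_symm⟩),
    iN_congr (show Ad n c a ↔ Ad n a c from ⟨ad_symm, ad_symm⟩),
    iN_congr (show Ad n d a ↔ Ad n a d from ⟨ad_symm, ad_symm⟩),
    iN_congr (show Ad n c b ↔ Ad n b c from ⟨ad_symm, ad_symm⟩),
    iN_congr (show Ad n d b ↔ Ad n b d from ⟨ad_symm, ad_symm⟩),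
    iN_congr (show Ad n d c ↔ Ad n c d from ⟨ad_symm, ad_symm⟩)]
  ring

lemma caseB {x y z o : Equiv.Perm (Fin n)}
    (dxy : x ≠ y) (dxz : x ≠ z) (dxo : x ≠ o) (dyz : y ≠ z) (dyo : y ≠ o) (dzo : z ≠ o)
    (sy : Equiv.Perm.sign y = Equiv.Perm.sign x)
    (sz : Equiv.Perm.sign z = Equiv.Perm.sign x)
    (so : Equiv.Perm.sign o ≠ Equiv.Perm.sign x) :
    P6 n x y z o + E6 n x y z o ≤ 9 := by
  have hE := E6_expand hn dxy dxz dxo dyz dyo dzo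
  have z1 : iN (Ad n x y) = 0 := iN_false (not_ad_same_sign hn sy.symm)
  have z2 : iN (Ad n x z) = 0 := iN_false (not_ad_same_sign hn sz.symm)
  have z3 : iN (Ad n y z) = 0 := iN_false (not_ad_same_sign hn (sy.trans sz.symm))
  have p3 : cP (AS x y z o) x o = 0 := cP_sign hn (fun h => so h.symm)
  have p5 : cP (AS x y z o) y o = 0 := cP_sign hn (fun h => so (h.symm.trans sy))
  have p6 : cP (AS x y z o) z o = 0 := cP_sign hn (fun h => so (h.symm.trans sz))
  have hoA : o ∈ AS x y z o := by simp [AS]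
  have f1 : cP (AS x y z o) x y + iN (Ad n x o ∧ Ad n y o) ≤ 2 := by
    by_cases h1 : Ad n x o ∧ Ad n y o
    · have := cP_le_one hn dxy hoA h1.1 h1.2
      rw [iN_true h1]
      omega
    · have := cP_le_two (A := AS x y z o) hn dxy
      rw [iN_false h1]
      omega
  have f2 : cP (AS x y z o) x z + iN (Ad n x o ∧ Ad n z o) ≤ 2 := by
    by_cases h1 : Ad n x o ∧ Ad n z o
    · have := cP_le_one hn dxz hoA h1.1 h1.2
      rw [iN_true h1]
      omega
    · have := cP_le_two (A := AS x y z o) hn dxz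
      rw [iN_false h1]
      omega
  have f3 : cP (AS x y z o) y z + iN (Ad n y o ∧ Ad n z o) ≤ 2 := by
    by_cases h1 : Ad n y o ∧ Ad n z o
    · have := cP_le_one hn dyz hoA h1.1 h1.2
      rw [iN_true h1]
      omega
    · have := cP_le_two (A := AS x y z o) hn dyz
      rw [iN_false h1]
      omega
  have g1 := iN_and (Ad n x o) (Ad n y o)
  have g2 := iN_and (Ad n x o) (Ad n z o)
  have g3 := iN_and (Ad n y o) (Ad n z o)
  have e1 := iN_le_one (Ad n x o)
  have e2 := iN_le_one (Ad n y o)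
  have e3 := iN_le_one (Ad n z o)
  rw [P6, hE, z1, z2, z3, p3, p5, p6]
  omega

lemma caseC {x y z o : Equiv.Perm (Fin n)}
    (dxy : x ≠ y) (dxz : x ≠ z) (dxo : x ≠ o) (dyz : y ≠ z) (dyo : y ≠ o) (dzo : z ≠ o)
    (sy : Equiv.Perm.sign y = Equiv.Perm.sign x)
    (sz : Equiv.Perm.sign z ≠ Equiv.Perm.sign x)
    (so : Equiv.Perm.sign o = Equiv.Perm.sign z) :
    P6 n x y z o + E6 n x y z o ≤ 9 := by
  have hE := E6_expand hn dxy dxz dxo dyz dyo dzo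
  have z1 : iN (Ad n x y) = 0 := iN_false (not_ad_same_sign hn sy.symm)
  have z2 : iN (Ad n z o) = 0 := iN_false (not_ad_same_sign hn so.symm)
  have p2 : cP (AS x y z o) x z = 0 := cP_sign hn (fun h => sz h.symm)
  have p3 : cP (AS x y z o) x o = 0 := cP_sign hn (fun h => sz ((h.trans so).symm))
  have p4 : cP (AS x y z o) y z = 0 := cP_sign hn (fun h => sz (h.symm.trans sy))
  have p5 : cP (AS x y z o) y o = 0 := cP_sign hn
    (fun h => sz ((so.symm.trans h.symm).trans sy))
  have hxA : x ∈ AS x y z o := by simp [AS]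
  have hyA : y ∈ AS x y z o := by simp [AS]
  have hzA : z ∈ AS x y z o := by simp [AS]
  have hoA : o ∈ AS x y z o := by simp [AS]
  have f1 := cP_bound2 hn dxy hzA hoA dzo
  have f2 : cP (AS x y z o) z o + iN (Ad n z x ∧ Ad n o x) + iN (Ad n z y ∧ Ad n o y) ≤ 2 :=
    cP_bound2 hn dzo hxA hyA dxy
  have g1 := iN_and (Ad n x z) (Ad n y z)
  have g2 := iN_and (Ad n x o) (Ad n y o)
  have g3 : iN (Ad n x z) + iN (Ad n x o) ≤ 1 + iN (Ad n z x ∧ Ad n o x) := by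
    have := iN_and (Ad n z x) (Ad n o x)
    rw [iN_congr (show Ad n z x ↔ Ad n x z from ⟨ad_symm, ad_symm⟩),
      iN_congr (show Ad n o x ↔ Ad n x o from ⟨ad_symm, ad_symm⟩)] at this
    omega
  have g4 : iN (Ad n y z) + iN (Ad n y o) ≤ 1 + iN (Ad n z y ∧ Ad n o y) := by
    have := iN_and (Ad n z y) (Ad n o y)
    rw [iN_congr (show Ad n z y ↔ Ad n y z from ⟨ad_symm, ad_symm⟩),
      iN_congr (show Ad n o y ↔ Ad n y o from ⟨ad_symm, ad_symm⟩)] at this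
    omega
  have e1 := iN_le_one (Ad n x z)
  have e2 := iN_le_one (Ad n x o)
  have e3 := iN_le_one (Ad n y z)
  have e4 := iN_le_one (Ad n y o)
  rw [P6, hE, z1, z2, p2, p3, p4, p5]
  omega

omit hn in
lemma units_trans {s t u : ℤˣ} (h1 : s ≠ u) (h2 : t ≠ u) : s = t := by
  rcases Int.units_eq_one_or s with h | h <;> rcases Int.units_eq_one_or t with h' | h' <;>
    rcases Int.units_eq_one_or u with h'' | h'' <;> subst h <;> subst h' <;> simp_all

omit hn in
lemma gdeg_sum {a b c d : Equiv.Perm (Fin n)}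
    (dab : a ≠ b) (dac : a ≠ c) (dad : a ≠ d) (dbc : b ≠ c) (dbd : b ≠ d) (dcd : c ≠ d)
    (v : Equiv.Perm (Fin n)) :
    gdeg n a b c d v = ∑ u ∈ AS a b c d, iN (Ad n u v) := by
  rw [AS, Finset.sum_insert (by simp [dab, dac, dad]),
    Finset.sum_insert (by simp [dbc, dbd]),
    Finset.sum_insert (by simp [dcd]), Finset.sum_singleton, gdeg]
  ring

/-- case dispatch on sign pattern -/
lemma bound_all {a b c d : Equiv.Perm (Fin n)}
    (dab : a ≠ b) (dac : a ≠ c) (dad : a ≠ d) (dbc : b ≠ c) (dbd : b ≠ d) (dcd : c ≠ d) :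
    ∃ W, (∀ w ∈ W, w ∈ Finset.univ \ AS a b c d ∧ 3 ≤ gdeg n a b c d w) ∧
      P6 n a b c d + E6 n a b c d ≤ 9 + ∑ w ∈ W, wt n a b c d w := by
  have conv : ∀ a' b' c' d' : Equiv.Perm (Fin n), a' ≠ b' → a' ≠ c' → a' ≠ d' →
      b' ≠ c' → b' ≠ d' → c' ≠ d' → AS a' b' c' d' = AS a b c d →
      (P6 n a' b' c' d' + E6 n a' b' c' d' ≤ 9) →
      (cP (AS a b c d) a' b' + cP (AS a b c d) a' c' + cP (AS a b c d) a' d' +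
        cP (AS a b c d) b' c' + cP (AS a b c d) b' d' + cP (AS a b c d) c' d' +
        E6 n a b c d ≤ 9) := by
    intro a' b' c' d' e1 e2 e3 e4 e5 e6 hAS hle
    have hEeq : E6 n a' b' c' d' = E6 n a b c d := by
      rw [E6, E6, hAS]
      apply Finset.sum_congr rfl
      intro v _
      rw [gdeg_sum e1 e2 e3 e4 e5 e6, gdeg_sum dab dac dad dbc dbd dcd, hAS]
    rw [P6, hAS, hEeq] at hle
    exact hle
  by_cases s1 : Equiv.Perm.sign b = Equiv.Perm.sign a <;>
    by_cases s2 : Equiv.Perm.sign c = Equiv.Perm.sign a <;>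
    by_cases s3 : Equiv.Perm.sign d = Equiv.Perm.sign a
  · exact caseA hn dab dac dad dbc dbd dcd s1 s2 s3
  -- b=a, c=a, d≠a : trio a b c, odd d : identity order
  · refine ⟨∅, by simp, ?_⟩
    rw [Finset.sum_empty]
    have h9 := caseB hn dab dac dad dbc dbd dcd s1 s2 s3
    rw [P6] at h9 ⊢
    omega
  -- b=a, c≠a, d=a : trio a b d, odd c : order (a,b,d,c)
  · refine ⟨∅, by simp, ?_⟩
    rw [Finset.sum_empty]
    have hAS : AS a b d c = AS a b c d := by
      ext w
      simp only [AS, Finset.mem_insert, Finset.mem_singleton]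
      tauto
    have h9 := conv a b d c dab dad dac dbd dbc (Ne.symm dcd) hAS (caseB hn dab dad dac dbd dbc (Ne.symm dcd) s1 s3 s2)
    have q1 := cP_comm (AS a b c d) d c
    rw [P6]
    omega
  -- b=a, c≠a, d≠a : c,d same ≠ a : pairs {a,b},{c,d} : identity order caseC
  · refine ⟨∅, by simp, ?_⟩
    rw [Finset.sum_empty]
    have hcd : Equiv.Perm.sign d = Equiv.Perm.sign c := units_trans s3 s2
    have h9 := caseC hn dab dac dad dbc dbd dcd s1 s2 hcd
    rw [P6] at h9 ⊢
    omega
  -- b≠a, c=a, d=a : trio a c d, odd b : order (a,c,d,b)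
  · refine ⟨∅, by simp, ?_⟩
    rw [Finset.sum_empty]
    have hAS : AS a c d b = AS a b c d := by
      ext w
      simp only [AS, Finset.mem_insert, Finset.mem_singleton]
      tauto
    have h9 := conv a c d b dac dad dab dcd (Ne.symm dbc) (Ne.symm dbd) hAS (caseB hn dac dad dab dcd (Ne.symm dbc) (Ne.symm dbd) s2 s3 s1)
    have q1 := cP_comm (AS a b c d) c b
    have q2 := cP_comm (AS a b c d) d b
    rw [P6]
    omega
  -- b≠a, c=a, d≠a : pairs {a,c},{b,d} : order (a,c,b,d)
  · refine ⟨∅, by simp, ?_⟩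
    rw [Finset.sum_empty]
    have hbd : Equiv.Perm.sign d = Equiv.Perm.sign b := units_trans s3 s1
    have hAS : AS a c b d = AS a b c d := by
      ext w
      simp only [AS, Finset.mem_insert, Finset.mem_singleton]
      tauto
    have h9 := conv a c b d dac dab dad (Ne.symm dbc) dcd dbd hAS (caseC hn dac dab dad (Ne.symm dbc) dcd dbd s2 s1 hbd)
    have q1 := cP_comm (AS a b c d) c b
    rw [P6]
    omega
  -- b≠a, c≠a, d=a : pairs {a,d},{b,c} : order (a,d,b,c)
  · refine ⟨∅, by simp, ?_⟩
    rw [Finset.sum_empty]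
    have hbc : Equiv.Perm.sign c = Equiv.Perm.sign b := units_trans s2 s1
    have hAS : AS a d b c = AS a b c d := by
      ext w
      simp only [AS, Finset.mem_insert, Finset.mem_singleton]
      tauto
    have h9 := conv a d b c dad dab dac (Ne.symm dbd) (Ne.symm dcd) dbc hAS (caseC hn dad dab dac (Ne.symm dbd) (Ne.symm dcd) dbc s3 s1 hbc)
    have q1 := cP_comm (AS a b c d) d b
    have q2 := cP_comm (AS a b c d) d c
    rw [P6]
    omega
  -- b,c,d all ≠ a : trio b c d, odd a : order (b,c,d,a)
  · refine ⟨∅, by simp, ?_⟩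
    rw [Finset.sum_empty]
    have hcb : Equiv.Perm.sign c = Equiv.Perm.sign b := units_trans s2 s1
    have hdb : Equiv.Perm.sign d = Equiv.Perm.sign b := units_trans s3 s1
    have hAS : AS b c d a = AS a b c d := by
      ext w
      simp only [AS, Finset.mem_insert, Finset.mem_singleton]
      tauto
    have h9 := conv b c d a dbc dbd (Ne.symm dab) dcd (Ne.symm dac) (Ne.symm dad) hAS (caseB hn dbc dbd (Ne.symm dab) dcd (Ne.symm dac)
      (Ne.symm dad) hcb hdb (fun h => s1 h.symm))
    have q1 := cP_comm (AS a b c d) b a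
    have q2 := cP_comm (AS a b c d) c a
    have q3 := cP_comm (AS a b c d) d a
    rw [P6]
    omega


lemma swap_eq (i : Fin n) :
    Equiv.swap i (⟨(i.val + 1) % n, Nat.mod_lt _ i.pos⟩ : Fin n) = tg n i := by
  rw [tg]
  congr 1
  apply Fin.ext
  show (i.val + 1) % n = (i + 1 : Fin n).val
  rw [Fin.val_add, Fin.val_one']
  rw [Nat.mod_eq_of_lt (show (1:ℕ) < n by omega)]

lemma MB_adj {u v : Equiv.Perm (Fin n)} : (MB n).Adj u v ↔ Ad n u v := by
  rw [MB, SimpleGraph.fromRel_adj]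
  constructor
  · rintro ⟨hne, h | h⟩
    · obtain ⟨i, hi⟩ := h
      exact ⟨hne, i, by rw [hi, swap_eq hn]⟩
    · obtain ⟨i, hi⟩ := h
      rw [swap_eq hn] at hi
      exact ⟨hne, i, by rw [hi, mul_assoc, tg_mul_self, mul_one]⟩
  · rintro ⟨hne, i, hi⟩
    exact ⟨hne, Or.inl ⟨i, by rw [swap_eq hn, ← hi]⟩⟩

lemma setNbhd_AS (a b c d : Equiv.Perm (Fin n)) :
    setNbhd (MB n) ↑(AS a b c d) = ↑(NS n a b c d) := by
  ext w
  constructor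
  · rintro ⟨hnotin, v, hv, hadj⟩
    rw [MB_adj hn] at hadj
    apply Finset.mem_coe.mpr
    rw [NS, Finset.mem_filter]
    refine ⟨Finset.mem_sdiff.mpr ⟨Finset.mem_univ w,
      fun hmem => hnotin (Finset.mem_coe.mpr hmem)⟩, ?_⟩
    have hv' : v = a ∨ v = b ∨ v = c ∨ v = d := by
      have := Finset.mem_coe.mp hv
      simpa [AS] using this
    rcases hv' with rfl | rfl | rfl | rfl
    · exact Or.inl hadj
    · exact Or.inr (Or.inl hadj)
    · exact Or.inr (Or.inr (Or.inl hadj))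
    · exact Or.inr (Or.inr (Or.inr hadj))
  · intro hw
    have hw' := Finset.mem_filter.mp (Finset.mem_coe.mp hw)
    have hnotin : w ∉ (↑(AS a b c d) : Set (Equiv.Perm (Fin n))) :=
      fun hmem => (Finset.mem_sdiff.mp hw'.1).2 (Finset.mem_coe.mp hmem)
    refine ⟨hnotin, ?_⟩
    rcases hw'.2 with h | h | h | h
    · exact ⟨a, Finset.mem_coe.mpr (by simp [AS]), (MB_adj hn).mpr h⟩
    · exact ⟨b, Finset.mem_coe.mpr (by simp [AS]), (MB_adj hn).mpr h⟩
    · exact ⟨c, Finset.mem_coe.mpr (by simp [AS]), (MB_adj hn).mpr h⟩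
    · exact ⟨d, Finset.mem_coe.mpr (by simp [AS]), (MB_adj hn).mpr h⟩

omit hn in
lemma finset_four {F : Finset (Equiv.Perm (Fin n))} (h : F.card = 4) :
    ∃ a b c d : Equiv.Perm (Fin n), a ≠ b ∧ a ≠ c ∧ a ≠ d ∧ b ≠ c ∧ b ≠ d ∧ c ≠ d ∧
      F = {a, b, c, d} := by
  obtain ⟨a, T, haT, rfl, hT⟩ := Finset.card_eq_succ.mp h
  obtain ⟨b, T2, hbT, rfl, hT2⟩ := Finset.card_eq_succ.mp hT
  obtain ⟨c, T3, hcT, rfl, hT3⟩ := Finset.card_eq_succ.mp hT2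
  obtain ⟨d, hd⟩ := Finset.card_eq_one.mp hT3
  subst hd
  simp only [Finset.mem_insert, Finset.mem_singleton] at haT hbT hcT
  push_neg at haT hbT hcT
  exact ⟨a, b, c, d, haT.1, haT.2.1, haT.2.2, hbT.1, hbT.2, hcT, rfl⟩

theorem part1 (S : Set (Equiv.Perm (Fin n))) (hS : S.ncard = 4) :
    4 * n - 9 ≤ (setNbhd (MB n) S).ncard := by
  have hcard : S.toFinset.card = 4 := by
    rw [← Set.ncard_eq_toFinset_card']
    exact hS
  obtain ⟨a, b, c, d, d1, d2, d3, d4, d5, d6, hF⟩ := finset_four hcard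
  have hSet : S = ↑(AS a b c d) := by
    rw [← Set.coe_toFinset S, hF]
    rfl
  rw [hSet, setNbhd_AS hn, Set.ncard_coe_finset]
  obtain ⟨W, hW, hbound⟩ := bound_all hn d1 d2 d3 d4 d5 d6
  have hmc := master_count hn W hW
  omega


theorem part2 :
    ∃ S : Set (Equiv.Perm (Fin n)), S.ncard = 4 ∧ (setNbhd (MB n) S).ncard = 4 * n - 9 := by
  have h1n : (1 : Fin n).val = 1 := by
    rw [Fin.val_one']
    exact Nat.mod_eq_of_lt (by omega)
  have v0 : ((0 : Fin n)).val = 0 := by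
    rw [show ((0 : Fin n)).val = 0 % n from rfl]
    exact Nat.mod_eq_of_lt (by omega)
  have v2 : ((2 : Fin n)).val = 2 := by
    rw [show ((2 : Fin n)).val = 2 % n from rfl]
    exact Nat.mod_eq_of_lt (by omega)
  have v4 : ((4 : Fin n)).val = 4 := by
    rw [show ((4 : Fin n)).val = 4 % n from rfl]
    exact Nat.mod_eq_of_lt (by omega)
  have s0 : ((0 : Fin n) + 1).val = 1 := by
    rw [Fin.val_add, h1n, v0]
    exact Nat.mod_eq_of_lt (by omega)
  have s2 : ((2 : Fin n) + 1).val = 3 := by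
    rw [Fin.val_add, h1n, v2]
    exact Nat.mod_eq_of_lt (by omega)
  have s4 : ((4 : Fin n) + 1).val = 5 := by
    rw [Fin.val_add, h1n, v4]
    exact Nat.mod_eq_of_lt (by omega)
  have dne : ∀ (x y : Fin n), x.val ≠ y.val → x ≠ y :=
    fun x y h hxy => h (congrArg Fin.val hxy)
  have d20 : (2 : Fin n) ≠ 0 := dne _ _ (by rw [v2, v0]; omega)
  have d40 : (4 : Fin n) ≠ 0 := dne _ _ (by rw [v4, v0]; omega)
  have d42 : (4 : Fin n) ≠ 2 := dne _ _ (by rw [v4, v2]; omega)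
  have f02 : Far (0 : Fin n) (2 : Fin n) :=
    ⟨d20, dne _ _ (by rw [v2, s0]; omega), dne _ _ (by rw [v0, s2]; omega)⟩
  have f04 : Far (0 : Fin n) (4 : Fin n) :=
    ⟨d40, dne _ _ (by rw [v4, s0]; omega), dne _ _ (by rw [v0, s4]; omega)⟩
  have f24 : Far (2 : Fin n) (4 : Fin n) :=
    ⟨d42, dne _ _ (by rw [v4, s2]; omega), dne _ _ (by rw [v2, s4]; omega)⟩
  have hsg2 : ∀ a b : Fin n, Equiv.Perm.sign (tg n a * tg n b) = 1 := by
    intro a b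
    rw [map_mul, tg_sign hn, tg_sign hn]
    decide
  have htne : ∀ (a b i : Fin n), tg n a * tg n i ≠ tg n b := by
    intro a b i h
    have := congrArg Equiv.Perm.sign h
    rw [hsg2, tg_sign hn] at this
    exact absurd this (by decide)
  have hone : ∀ (a i : Fin n), tg n a * tg n i = 1 → i = a := by
    intro a i h
    have h2 : tg n a * (tg n a * tg n i) = tg n a * 1 := by rw [h]
    rw [tg_tg_cancel, mul_one] at h2
    exact tg_inj hn h2
  -- the extremal set
  refine ⟨↑(AS (1 : Equiv.Perm (Fin n)) (tg n 0) (tg n 2) (tg n 4)), ?_, ?_⟩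
  · rw [Set.ncard_coe_finset, AS]
    rw [Finset.card_insert_of_notMem (by
      simp only [Finset.mem_insert, Finset.mem_singleton]
      push_neg
      exact ⟨fun h => tg_ne_one hn 0 h.symm, fun h => tg_ne_one hn 2 h.symm,
        fun h => tg_ne_one hn 4 h.symm⟩)]
    rw [Finset.card_insert_of_notMem (by
      simp only [Finset.mem_insert, Finset.mem_singleton]
      push_neg
      exact ⟨fun h => d20 (tg_inj hn h).symm, fun h => d40 (tg_inj hn h).symm⟩)]
    rw [Finset.card_insert_of_notMem (by
      simp only [Finset.mem_singleton]
      exact fun h => d42 (tg_inj hn h).symm)]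
    rfl
  · rw [setNbhd_AS hn, Set.ncard_coe_finset]
    set B1 := ((Finset.univ : Finset (Fin n)) \ {0, 2, 4}).image (fun i => tg n i) with hB1
    set B2 := ((Finset.univ : Finset (Fin n)) \ {0}).image (fun i => tg n 0 * tg n i) with hB2
    set B3 := ((Finset.univ : Finset (Fin n)) \ {2, 0}).image (fun i => tg n 2 * tg n i) with hB3
    set B4 := ((Finset.univ : Finset (Fin n)) \ {4, 0, 2}).image
      (fun i => tg n 4 * tg n i) with hB4
    have hmem1 : ∀ w, w ∈ B1 ↔ ∃ i, (i ≠ 0 ∧ i ≠ 2 ∧ i ≠ 4) ∧ tg n i = w := by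
      intro w
      rw [hB1, Finset.mem_image]
      constructor
      · rintro ⟨i, hi, rfl⟩
        rw [Finset.mem_sdiff] at hi
        have := hi.2
        simp only [Finset.mem_insert, Finset.mem_singleton] at this
        push_neg at this
        exact ⟨i, this, rfl⟩
      · rintro ⟨i, hi, rfl⟩
        exact ⟨i, Finset.mem_sdiff.mpr ⟨Finset.mem_univ i, by
          simp only [Finset.mem_insert, Finset.mem_singleton]
          push_neg
          exact hi⟩, rfl⟩
    have hmem2 : ∀ w, w ∈ B2 ↔ ∃ i, i ≠ 0 ∧ tg n 0 * tg n i = w := by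
      intro w
      rw [hB2, Finset.mem_image]
      constructor
      · rintro ⟨i, hi, rfl⟩
        rw [Finset.mem_sdiff, Finset.mem_singleton] at hi
        exact ⟨i, hi.2, rfl⟩
      · rintro ⟨i, hi, rfl⟩
        exact ⟨i, Finset.mem_sdiff.mpr ⟨Finset.mem_univ i, Finset.notMem_singleton.mpr hi⟩, rfl⟩
    have hmem3 : ∀ w, w ∈ B3 ↔ ∃ i, (i ≠ 2 ∧ i ≠ 0) ∧ tg n 2 * tg n i = w := by
      intro w
      rw [hB3, Finset.mem_image]
      constructor
      · rintro ⟨i, hi, rfl⟩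
        rw [Finset.mem_sdiff] at hi
        have := hi.2
        simp only [Finset.mem_insert, Finset.mem_singleton] at this
        push_neg at this
        exact ⟨i, this, rfl⟩
      · rintro ⟨i, hi, rfl⟩
        exact ⟨i, Finset.mem_sdiff.mpr ⟨Finset.mem_univ i, by
          simp only [Finset.mem_insert, Finset.mem_singleton]
          push_neg
          exact hi⟩, rfl⟩
    have hmem4 : ∀ w, w ∈ B4 ↔ ∃ i, (i ≠ 4 ∧ i ≠ 0 ∧ i ≠ 2) ∧ tg n 4 * tg n i = w := by
      intro w
      rw [hB4, Finset.mem_image]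
      constructor
      · rintro ⟨i, hi, rfl⟩
        rw [Finset.mem_sdiff] at hi
        have := hi.2
        simp only [Finset.mem_insert, Finset.mem_singleton] at this
        push_neg at this
        exact ⟨i, this, rfl⟩
      · rintro ⟨i, hi, rfl⟩
        exact ⟨i, Finset.mem_sdiff.mpr ⟨Finset.mem_univ i, by
          simp only [Finset.mem_insert, Finset.mem_singleton]
          push_neg
          exact hi⟩, rfl⟩
    have hBeq : NS n 1 (tg n 0) (tg n 2) (tg n 4) = B1 ∪ (B2 ∪ (B3 ∪ B4)) := by
      ext w
      rw [NS, Finset.mem_filter, Finset.mem_sdiff, Finset.mem_union, Finset.mem_union,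
        Finset.mem_union]
      constructor
      · rintro ⟨⟨_, hwAS⟩, hadj⟩
        have hne : w ≠ 1 ∧ w ≠ tg n 0 ∧ w ≠ tg n 2 ∧ w ≠ tg n 4 := by
          simpa [AS] using hwAS
        rcases hadj with h | h | h | h
        · obtain ⟨_, i, hi⟩ := h
          rw [one_mul] at hi
          refine Or.inl ((hmem1 w).mpr ⟨i, ⟨?_, ?_, ?_⟩, hi.symm⟩)
          · rintro rfl; exact hne.2.1 hi
          · rintro rfl; exact hne.2.2.1 hi
          · rintro rfl; exact hne.2.2.2 hi
        · obtain ⟨_, i, hi⟩ := h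
          refine Or.inr (Or.inl ((hmem2 w).mpr ⟨i, ?_, hi.symm⟩))
          rintro rfl
          rw [tg_mul_self] at hi
          exact hne.1 hi
        · obtain ⟨_, i, hi⟩ := h
          have hi2 : i ≠ 2 := by
            rintro rfl
            rw [tg_mul_self] at hi
            exact hne.1 hi
          by_cases hi0 : i = 0
          · subst hi0
            rw [← far_commute f02] at hi
            exact Or.inr (Or.inl ((hmem2 w).mpr ⟨2, d20, hi.symm⟩))
          · exact Or.inr (Or.inr (Or.inl ((hmem3 w).mpr ⟨i, ⟨hi2, hi0⟩, hi.symm⟩)))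
        · obtain ⟨_, i, hi⟩ := h
          have hi4 : i ≠ 4 := by
            rintro rfl
            rw [tg_mul_self] at hi
            exact hne.1 hi
          by_cases hi0 : i = 0
          · subst hi0
            rw [← far_commute f04] at hi
            exact Or.inr (Or.inl ((hmem2 w).mpr ⟨4, d40, hi.symm⟩))
          by_cases hi2 : i = 2
          · subst hi2
            rw [← far_commute f24] at hi
            exact Or.inr (Or.inr (Or.inl ((hmem3 w).mpr ⟨4, ⟨d42, d40⟩, hi.symm⟩)))
          · exact Or.inr (Or.inr (Or.inr ((hmem4 w).mpr ⟨i, ⟨hi4, hi0, hi2⟩, hi.symm⟩)))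
      · intro hw
        refine ⟨⟨Finset.mem_univ w, ?_⟩, ?_⟩
        · -- w ∉ AS
          rcases hw with h | h | h | h
          · obtain ⟨i, ⟨hi0, hi2, hi4⟩, rfl⟩ := (hmem1 _).mp h
            simp only [AS, Finset.mem_insert, Finset.mem_singleton]
            push_neg
            exact ⟨tg_ne_one hn i, fun hh => hi0 (tg_inj hn hh),
              fun hh => hi2 (tg_inj hn hh), fun hh => hi4 (tg_inj hn hh)⟩
          · obtain ⟨i, hi0, rfl⟩ := (hmem2 _).mp h
            simp only [AS, Finset.mem_insert, Finset.mem_singleton]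
            push_neg
            exact ⟨fun hh => hi0 (hone 0 i hh), htne 0 0 i, htne 0 2 i, htne 0 4 i⟩
          · obtain ⟨i, ⟨hi2, hi0⟩, rfl⟩ := (hmem3 _).mp h
            simp only [AS, Finset.mem_insert, Finset.mem_singleton]
            push_neg
            exact ⟨fun hh => hi2 (hone 2 i hh), htne 2 0 i, htne 2 2 i, htne 2 4 i⟩
          · obtain ⟨i, ⟨hi4, hi0, hi2⟩, rfl⟩ := (hmem4 _).mp h
            simp only [AS, Finset.mem_insert, Finset.mem_singleton]
            push_neg
            exact ⟨fun hh => hi4 (hone 4 i hh), htne 4 0 i, htne 4 2 i, htne 4 4 i⟩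
        · rcases hw with h | h | h | h
          · obtain ⟨i, _, rfl⟩ := (hmem1 _).mp h
            exact Or.inl ⟨fun hh => tg_ne_one hn i hh.symm, i, (one_mul _).symm⟩
          · obtain ⟨i, _, rfl⟩ := (hmem2 _).mp h
            exact Or.inr (Or.inl (ad_of_mul hn _ i))
          · obtain ⟨i, _, rfl⟩ := (hmem3 _).mp h
            exact Or.inr (Or.inr (Or.inl (ad_of_mul hn _ i)))
          · obtain ⟨i, _, rfl⟩ := (hmem4 _).mp h
            exact Or.inr (Or.inr (Or.inr (ad_of_mul hn _ i)))
    -- disjointness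
    have hd1 : Disjoint B1 (B2 ∪ (B3 ∪ B4)) := by
      rw [Finset.disjoint_left]
      intro w hw1 hw2
      obtain ⟨i, _, rfl⟩ := (hmem1 _).mp hw1
      rw [Finset.mem_union, Finset.mem_union] at hw2
      rcases hw2 with h | h | h
      · obtain ⟨j, _, hj⟩ := (hmem2 _).mp h
        exact htne 0 i j hj
      · obtain ⟨j, _, hj⟩ := (hmem3 _).mp h
        exact htne 2 i j hj
      · obtain ⟨j, _, hj⟩ := (hmem4 _).mp h
        exact htne 4 i j hj
    have hd2 : Disjoint B2 (B3 ∪ B4) := by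
      rw [Finset.disjoint_left]
      intro w hw1 hw2
      obtain ⟨i, hi0, rfl⟩ := (hmem2 _).mp hw1
      rw [Finset.mem_union] at hw2
      rcases hw2 with h | h
      · obtain ⟨j, ⟨_, hj0⟩, hj⟩ := (hmem3 _).mp h
        rcases UF hn (fun hh => hi0 hh.symm) hj.symm with ⟨h1, _⟩ | ⟨_, h2, _⟩
        · exact d20 h1
        · exact hj0 h2
      · obtain ⟨j, ⟨_, hj0, _⟩, hj⟩ := (hmem4 _).mp h
        rcases UF hn (fun hh => hi0 hh.symm) hj.symm with ⟨h1, _⟩ | ⟨_, h2, _⟩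
        · exact d40 h1
        · exact hj0 h2
    have hd3 : Disjoint B3 B4 := by
      rw [Finset.disjoint_left]
      intro w hw1 hw2
      obtain ⟨i, ⟨hi2, _⟩, rfl⟩ := (hmem3 _).mp hw1
      obtain ⟨j, ⟨_, _, hj2⟩, hj⟩ := (hmem4 _).mp hw2
      rcases UF hn (fun hh => hi2 hh.symm) hj.symm with ⟨h1, _⟩ | ⟨_, h2, _⟩
      · exact d42 h1
      · exact hj2 h2
    -- cardinalities
    have hinj : Function.Injective (tg n) := fun i j h => tg_inj hn h
    have hc1 : B1.card = n - 3 := by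
      rw [hB1, Finset.card_image_of_injective _ hinj,
        Finset.card_sdiff_of_subset (Finset.subset_univ _), Finset.card_univ, Fintype.card_fin]
      rw [Finset.card_insert_of_notMem (by
        simp only [Finset.mem_insert, Finset.mem_singleton]
        push_neg
        exact ⟨d20.symm, d40.symm⟩),
        Finset.card_insert_of_notMem (Finset.notMem_singleton.mpr d42.symm),
        Finset.card_singleton]
    have hinj2 : ∀ a : Fin n, Function.Injective (fun i => tg n a * tg n i) :=
      fun a i j h => tg_inj hn (mul_left_cancel h)
    have hc2 : B2.card = n - 1 := by
      rw [hB2, Finset.card_image_of_injective _ (hinj2 0),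
        Finset.card_sdiff_of_subset (Finset.subset_univ _), Finset.card_univ, Fintype.card_fin,
        Finset.card_singleton]
    have hc3 : B3.card = n - 2 := by
      rw [hB3, Finset.card_image_of_injective _ (hinj2 2),
        Finset.card_sdiff_of_subset (Finset.subset_univ _), Finset.card_univ, Fintype.card_fin,
        Finset.card_insert_of_notMem (Finset.notMem_singleton.mpr d20),
        Finset.card_singleton]
    have hc4 : B4.card = n - 3 := by
      rw [hB4, Finset.card_image_of_injective _ (hinj2 4),
        Finset.card_sdiff_of_subset (Finset.subset_univ _), Finset.card_univ, Fintype.card_fin]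
      rw [Finset.card_insert_of_notMem (by
        simp only [Finset.mem_insert, Finset.mem_singleton]
        push_neg
        exact ⟨d40, d42⟩),
        Finset.card_insert_of_notMem (Finset.notMem_singleton.mpr d20.symm),
        Finset.card_singleton]
    rw [hBeq, Finset.card_union_of_disjoint hd1, Finset.card_union_of_disjoint hd2,
      Finset.card_union_of_disjoint hd3, hc1, hc2, hc3, hc4]
    omega

end core
end MBx

theorem stmt_10 {n : ℕ} (hn : 6 ≤ n) :
    (∀ S : Set (Equiv.Perm (Fin n)), S.ncard = 4 →
        4 * n - 9 ≤ (setNbhd (MB n) S).ncard) ∧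
      ∃ S : Set (Equiv.Perm (Fin n)), S.ncard = 4 ∧
        (setNbhd (MB n) S).ncard = 4 * n - 9 := by
  haveI : NeZero n := ⟨by omega⟩
  exact ⟨fun S hS => MBx.part1 hn S hS, MBx.part2 hn⟩
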